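/- arXiv:2508.18042 — 8 statements merged into one kernel-verified Lean document; each statement's English description precedes it below -/
import Mathlib

section
/- Let $F$ be a graph, $u \in V(F)$, and let $\mathcal{F}_u$ be the set of minimal (under inclusion) subgraphs $F' \subseteq F$ with $u \in V(F')$ and $e_{F'}/(v_{F'}-1) = m_1(F)$. Then any two distinct $F_1, F_2 \in \mathcal{F}_u$ satisfy $V(F_1) \cap V(F_2) = \{u\}$. -/
/-- The 1-density `e_H / (v_H - 1)` of a subgraph. -/
noncomputable def subDensity {V : Type*} {F : SimpleGraph V} (H : F.Subgraph) : ℝ :=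
  (H.edgeSet.ncard : ℝ) / ((H.verts.ncard : ℝ) - 1)

/-- `m₁(F) = max { e_{F'}/(v_{F'}-1) : F' ⊆ F, v_{F'} ≥ 2 }`. -/
noncomputable def m1 {V : Type*} (F : SimpleGraph V) : ℝ :=
  sSup {d : ℝ | ∃ H : F.Subgraph, 2 ≤ H.verts.ncard ∧ d = subDensity H}

/-- if `F₁, F₂` are distinct minimal (under inclusion) subgraphs of `F`
containing `u` with 1-density equal to `m₁(F)`, then `V(F₁) ∩ V(F₂) = {u}`. -/
theorem minimal_densest_subgraphs_intersect_in_u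
    {V : Type*} [Fintype V] (F : SimpleGraph V) (u : V)
    (F1 F2 : F.Subgraph)
    (h1u : u ∈ F1.verts) (h1d : subDensity F1 = m1 F)
    (h1min : ∀ H : F.Subgraph, u ∈ H.verts → subDensity H = m1 F → H ≤ F1 → H = F1)
    (h2u : u ∈ F2.verts) (h2d : subDensity F2 = m1 F)
    (h2min : ∀ H : F.Subgraph, u ∈ H.verts → subDensity H = m1 F → H ≤ F2 → H = F2)
    (hne : F1 ≠ F2) :
    F1.verts ∩ F2.verts = {u} := by
  classical
  set m := m1 F with hm
  -- any subgraph with ≥ 2 vertices has density ≤ m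
  have hbdd : BddAbove {d : ℝ | ∃ H : F.Subgraph, 2 ≤ H.verts.ncard ∧ d = subDensity H} := by
    refine ⟨(F.edgeSet.ncard : ℝ), ?_⟩
    rintro d ⟨H, hH, rfl⟩
    have h1 : (H.edgeSet.ncard : ℝ) ≤ (F.edgeSet.ncard : ℝ) := by
      exact_mod_cast Set.ncard_le_ncard H.edgeSet_subset (Set.toFinite _)
    have h2 : (1:ℝ) ≤ (H.verts.ncard : ℝ) - 1 := by
      have : (2:ℝ) ≤ (H.verts.ncard : ℝ) := by exact_mod_cast hH
      linarith
    have := div_le_self (by positivity : (0:ℝ) ≤ (H.edgeSet.ncard : ℝ)) h2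
    calc subDensity H ≤ (H.edgeSet.ncard : ℝ) := this
      _ ≤ _ := h1
  have hle : ∀ H : F.Subgraph, 2 ≤ H.verts.ncard → subDensity H ≤ m :=
    fun H hH => le_csSup hbdd ⟨H, hH, rfl⟩
  -- the case m = 0
  by_cases hm0 : m = 0
  · exfalso
    have hdens : subDensity (F.singletonSubgraph u) = m := by
      rw [hm0]
      simp [subDensity, SimpleGraph.edgeSet_singletonSubgraph]
    have hu : u ∈ (F.singletonSubgraph u).verts := by
      simp [SimpleGraph.singletonSubgraph]
    have e1 := h1min _ hu hdens (((F.singletonSubgraph_le_iff u F1)).mpr h1u)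
    have e2 := h2min _ hu hdens (((F.singletonSubgraph_le_iff u F2)).mpr h2u)
    exact hne (e1 ▸ e2 ▸ rfl)
  -- m ≠ 0: density m subgraphs containing a vertex have ≥ 2 vertices
  have hbig : ∀ H : F.Subgraph, u ∈ H.verts → subDensity H = m → 2 ≤ H.verts.ncard := by
    intro H hu hd
    by_contra hn
    push_neg at hn
    have h1 : H.verts.ncard = 1 := by
      have : 0 < H.verts.ncard := (Set.ncard_pos (Set.toFinite _)).mpr ⟨u, hu⟩
      omega
    apply hm0
    rw [← hd]
    simp [subDensity, h1]
  have hA2 := hbig F1 h1u h1d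
  have hB2 := hbig F2 h2u h2d
  have hApos : (0:ℝ) < (F1.verts.ncard : ℝ) - 1 := by
    have : (2:ℝ) ≤ (F1.verts.ncard : ℝ) := by exact_mod_cast hA2
    linarith
  have hmpos : 0 < m := by
    have : (0:ℝ) ≤ m := by
      rw [← h1d, subDensity]
      exact div_nonneg (by positivity) (le_of_lt hApos)
    exact lt_of_le_of_ne this (Ne.symm hm0)
  -- main argument
  have hkey : (F1.verts ∩ F2.verts).ncard ≤ 1 := by
    by_contra hcard
    push_neg at hcard
    have hcard : 2 ≤ (F1.verts ∩ F2.verts).ncard := hcard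
    set A := F1 ⊔ F2
    set B := F1 ⊓ F2
    have hBv : B.verts = F1.verts ∩ F2.verts := rfl
    have hAv : A.verts = F1.verts ∪ F2.verts := rfl
    have hB2' : 2 ≤ B.verts.ncard := by rw [hBv]; exact hcard
    have hA2' : 2 ≤ A.verts.ncard := by
      rw [hAv]
      exact le_trans hA2 (Set.ncard_le_ncard Set.subset_union_left (Set.toFinite _))
    -- counts
    have hv : A.verts.ncard + B.verts.ncard = F1.verts.ncard + F2.verts.ncard := by
      rw [hAv, hBv]
      exact Set.ncard_union_add_ncard_inter _ _ (Set.toFinite _) (Set.toFinite _)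
    have he : A.edgeSet.ncard + B.edgeSet.ncard = F1.edgeSet.ncard + F2.edgeSet.ncard := by
      rw [show A.edgeSet = F1.edgeSet ∪ F2.edgeSet from SimpleGraph.Subgraph.edgeSet_sup,
        show B.edgeSet = F1.edgeSet ∩ F2.edgeSet from SimpleGraph.Subgraph.edgeSet_inf]
      exact Set.ncard_union_add_ncard_inter _ _ (Set.toFinite _) (Set.toFinite _)
    -- real versions
    have hApos' : (0:ℝ) < (A.verts.ncard : ℝ) - 1 := by
      have : (2:ℝ) ≤ (A.verts.ncard : ℝ) := by exact_mod_cast hA2'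
      linarith
    have hBpos' : (0:ℝ) < (B.verts.ncard : ℝ) - 1 := by
      have : (2:ℝ) ≤ (B.verts.ncard : ℝ) := by exact_mod_cast hB2'
      linarith
    have hBApos : (0:ℝ) < (F2.verts.ncard : ℝ) - 1 := by
      have : (2:ℝ) ≤ (F2.verts.ncard : ℝ) := by exact_mod_cast hB2
      linarith
    have eA : (F1.edgeSet.ncard : ℝ) = m * ((F1.verts.ncard : ℝ) - 1) := by
      rw [← h1d, subDensity, div_mul_cancel₀]
      exact ne_of_gt hApos
    have eB : (F2.edgeSet.ncard : ℝ) = m * ((F2.verts.ncard : ℝ) - 1) := by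
      rw [← h2d, subDensity, div_mul_cancel₀]
      exact ne_of_gt hBApos
    have leA : (A.edgeSet.ncard : ℝ) ≤ m * ((A.verts.ncard : ℝ) - 1) := by
      have := hle A hA2'
      rw [subDensity, div_le_iff₀ hApos'] at this
      linarith
    have leB : (B.edgeSet.ncard : ℝ) ≤ m * ((B.verts.ncard : ℝ) - 1) := by
      have := hle B hB2'
      rw [subDensity, div_le_iff₀ hBpos'] at this
      linarith
    have hvR : (A.verts.ncard : ℝ) + (B.verts.ncard : ℝ)
        = (F1.verts.ncard : ℝ) + (F2.verts.ncard : ℝ) := by exact_mod_cast hv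
    have heR : (A.edgeSet.ncard : ℝ) + (B.edgeSet.ncard : ℝ)
        = (F1.edgeSet.ncard : ℝ) + (F2.edgeSet.ncard : ℝ) := by exact_mod_cast he
    have eBeq : (B.edgeSet.ncard : ℝ) = m * ((B.verts.ncard : ℝ) - 1) := by nlinarith
    have hBd : subDensity B = m := by
      rw [subDensity, eBeq, mul_div_assoc, div_self (ne_of_gt hBpos'), mul_one]
    have huB : u ∈ B.verts := ⟨h1u, h2u⟩
    have e1 := h1min B huB hBd inf_le_left
    have e2 := h2min B huB hBd inf_le_right
    exact hne (e1 ▸ e2 ▸ rfl)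
  -- conclude
  have h1' : 1 ≤ (F1.verts ∩ F2.verts).ncard :=
    (Set.ncard_pos (Set.toFinite _)).mpr ⟨u, h1u, h2u⟩
  have : (F1.verts ∩ F2.verts).ncard = 1 := le_antisymm hkey h1'
  obtain ⟨a, ha⟩ := Set.ncard_eq_one.mp this
  have : u = a := by
    have hu : u ∈ F1.verts ∩ F2.verts := ⟨h1u, h2u⟩
    rw [ha] at hu
    simpa using hu
  rw [ha, ← this]
end

section
/- Let $F$ be a graph and $u \in V(F)$ a vertex of minimum degree, i.e., $d_F(u) = \delta(F)$. Let $\mathcal{F}_u$ be the set of minimal subgraphs $F' \subseteq F$ with $u \in V(F')$ and $e_{F'}/(v_{F'}-1) = m_1(F)$. Then $|\mathcal{F}_u| \le 1$. -/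
private lemma subgraph_finite {V : Type*} [Finite V] (F : SimpleGraph V) :
    Finite F.Subgraph :=
  Finite.of_injective (fun H => (H.verts, H.Adj)) (by
    rintro ⟨v1, a1, _, _⟩ ⟨v2, a2, _, _⟩ h
    simp only [Prod.mk.injEq] at h
    cases h.1; cases h.2; rfl)

private lemma le_m1 {V : Type*} [Fintype V] (F : SimpleGraph V) (H : F.Subgraph)
    (h : 2 ≤ H.verts.ncard) : subDensity H ≤ m1 F := by
  have : Finite F.Subgraph := subgraph_finite F
  apply le_csSup
  · apply Set.Finite.bddAbove
    have hsub : {d : ℝ | ∃ H : F.Subgraph, 2 ≤ H.verts.ncard ∧ d = subDensity H}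
        ⊆ Set.range (subDensity (F := F)) := by
      rintro d ⟨H, _, rfl⟩; exact ⟨H, rfl⟩
    exact (Set.finite_range _).subset hsub
  · exact ⟨H, h, rfl⟩

private lemma edge_le {V : Type*} [Fintype V] (F : SimpleGraph V) (H : F.Subgraph)
    (h : 2 ≤ H.verts.ncard) :
    (H.edgeSet.ncard : ℝ) ≤ m1 F * ((H.verts.ncard : ℝ) - 1) := by
  have h2 : (2 : ℝ) ≤ (H.verts.ncard : ℝ) := by exact_mod_cast h
  have h1 : (0 : ℝ) < (H.verts.ncard : ℝ) - 1 := by linarith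
  have := le_m1 F H h
  rw [subDensity, div_le_iff₀ h1] at this
  exact this

private lemma two_le_of_adj {V : Type*} [Finite V] {F : SimpleGraph V} {H : F.Subgraph}
    {a b : V} (h : H.Adj a b) : 2 ≤ H.verts.ncard := by
  have := (Set.one_lt_ncard (Set.toFinite _)).mpr ⟨a, h.fst_mem, b, h.snd_mem, h.ne⟩
  omega

private lemma exists_adj_of_edge {V : Type*} {F : SimpleGraph V} {H : F.Subgraph}
    (h : H.edgeSet.Nonempty) : ∃ a b, H.Adj a b := by
  obtain ⟨e, he⟩ := h
  revert he
  induction e using Sym2.ind with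
  | _ a b => exact fun he => ⟨a, b, SimpleGraph.Subgraph.mem_edgeSet.mp he⟩

private lemma del_edgeSet {V : Type*} {F : SimpleGraph V} (H : F.Subgraph) (u : V) :
    (H.deleteVerts {u}).edgeSet = H.edgeSet \ {e ∈ H.edgeSet | u ∈ e} := by
  ext e
  induction e using Sym2.ind with
  | _ a b =>
    simp only [SimpleGraph.Subgraph.mem_edgeSet, SimpleGraph.Subgraph.deleteVerts_adj,
      Set.mem_diff, Set.mem_setOf_eq, Sym2.mem_iff, Set.mem_singleton_iff]
    constructor
    · rintro ⟨_, hau, _, hbu, hadj⟩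
      exact ⟨hadj, fun h => h.2.elim (fun h => hau h.symm) (fun h => hbu h.symm)⟩
    · rintro ⟨hadj, hne⟩
      exact ⟨hadj.fst_mem, fun h => hne ⟨hadj, Or.inl h.symm⟩, hadj.snd_mem,
        fun h => hne ⟨hadj, Or.inr h.symm⟩, hadj⟩

/-- If `u ∈ H` and `H` has 1-density exactly `m₁(F)`, then the number of edges of `H`
at `u` is at least `m₁(F)`. -/
private lemma m1_le_deg {V : Type*} [Fintype V] (F : SimpleGraph V) (H : F.Subgraph) (u : V)
    (hu : u ∈ H.verts) (h2 : 2 ≤ H.verts.ncard)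
    (hd : (H.edgeSet.ncard : ℝ) = m1 F * ((H.verts.ncard : ℝ) - 1)) :
    m1 F ≤ ({e ∈ H.edgeSet | u ∈ e}.ncard : ℝ) := by
  set I := {e ∈ H.edgeSet | u ∈ e} with hI
  have hIsub : I ⊆ H.edgeSet := fun e he => he.1
  have hIle : I.ncard ≤ H.edgeSet.ncard := Set.ncard_le_ncard hIsub (Set.toFinite _)
  have hedel : (H.deleteVerts {u}).edgeSet.ncard = H.edgeSet.ncard - I.ncard := by
    rw [del_edgeSet]; exact Set.ncard_diff hIsub (Set.toFinite _)
  have hvdel : (H.deleteVerts {u}).verts.ncard = H.verts.ncard - 1 := by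
    rw [SimpleGraph.Subgraph.deleteVerts_verts,
      Set.ncard_diff (Set.singleton_subset_iff.mpr hu) (Set.toFinite _), Set.ncard_singleton]
  have hv2 : (2 : ℝ) ≤ (H.verts.ncard : ℝ) := by exact_mod_cast h2
  have hedelR : ((H.deleteVerts {u}).edgeSet.ncard : ℝ)
      = (H.edgeSet.ncard : ℝ) - (I.ncard : ℝ) := by
    rw [hedel, Nat.cast_sub hIle]
  have key : ((H.deleteVerts {u}).edgeSet.ncard : ℝ) ≤ m1 F * ((H.verts.ncard : ℝ) - 2) := by
    rcases le_or_gt 2 (H.deleteVerts {u}).verts.ncard with h | h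
    · have := edge_le F _ h
      have hcast : ((H.deleteVerts {u}).verts.ncard : ℝ) = (H.verts.ncard : ℝ) - 1 := by
        rw [hvdel, Nat.cast_sub (by omega)]; simp
      rw [hcast] at this
      calc ((H.deleteVerts {u}).edgeSet.ncard : ℝ) ≤ m1 F * ((H.verts.ncard : ℝ) - 1 - 1) := this
        _ = m1 F * ((H.verts.ncard : ℝ) - 2) := by ring
    · have hv : H.verts.ncard = 2 := by omega
      have he0 : (H.deleteVerts {u}).edgeSet = ∅ := by
        by_contra hne
        obtain ⟨a, b, hab⟩ := exists_adj_of_edge (Set.nonempty_iff_ne_empty.mpr hne)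
        have := two_le_of_adj hab
        omega
      rw [he0]
      have : (H.verts.ncard : ℝ) - 2 = 0 := by rw [hv]; norm_num
      simp [this]
  rw [hedelR] at key
  have hd' : (H.edgeSet.ncard : ℝ) = m1 F * ((H.verts.ncard : ℝ) - 1) := hd
  nlinarith [key, hd']

/-- if `u` is a vertex of minimum degree of `F`, then there is at most one
minimal (under inclusion) subgraph of `F` containing `u` whose 1-density equals `m₁(F)`:
any two such subgraphs coincide. -/
theorem minimal_densest_subgraph_unique_at_min_degree_vertex
    {V : Type*} [Fintype V] (F : SimpleGraph V) [DecidableRel F.Adj] (u : V)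
    (hu : F.degree u = F.minDegree)
    (F1 F2 : F.Subgraph)
    (h1u : u ∈ F1.verts) (h1d : subDensity F1 = m1 F)
    (h1min : ∀ H : F.Subgraph, u ∈ H.verts → subDensity H = m1 F → H ≤ F1 → H = F1)
    (h2u : u ∈ F2.verts) (h2d : subDensity F2 = m1 F)
    (h2min : ∀ H : F.Subgraph, u ∈ H.verts → subDensity H = m1 F → H ≤ F2 → H = F2) :
    F1 = F2 := by
  classical
  have hKu : u ∈ (F1 ⊓ F2).verts := by
    rw [SimpleGraph.Subgraph.verts_inf]; exact ⟨h1u, h2u⟩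
  rcases eq_or_ne (m1 F) 0 with hm | hm
  · -- degenerate case m₁(F) = 0
    have hK : subDensity (F1 ⊓ F2) = m1 F := by
      rw [hm]
      rcases le_or_gt 2 (F1 ⊓ F2).verts.ncard with h | h
      · have hle := le_m1 F _ h
        rw [hm] at hle
        have h2 : (2 : ℝ) ≤ ((F1 ⊓ F2).verts.ncard : ℝ) := by exact_mod_cast h
        have hge : 0 ≤ subDensity (F1 ⊓ F2) := by
          unfold subDensity
          apply div_nonneg (by positivity)
          linarith
        linarith
      · have h1 : (F1 ⊓ F2).verts.ncard = 1 := by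
          have := (Set.ncard_pos (Set.toFinite _)).mpr ⟨u, hKu⟩
          omega
        unfold subDensity
        rw [h1]
        norm_num
    exact (h1min _ hKu hK inf_le_left).symm.trans (h2min _ hKu hK inf_le_right)
  · -- m₁(F) ≠ 0
    have hv1' : 0 < F1.verts.ncard := (Set.ncard_pos (Set.toFinite _)).mpr ⟨u, h1u⟩
    have hv2' : 0 < F2.verts.ncard := (Set.ncard_pos (Set.toFinite _)).mpr ⟨u, h2u⟩
    have hv1 : 2 ≤ F1.verts.ncard := by
      by_contra h
      have h1 : F1.verts.ncard = 1 := by omega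
      apply hm
      rw [← h1d]
      unfold subDensity
      rw [h1]
      norm_num
    have hv2 : 2 ≤ F2.verts.ncard := by
      by_contra h
      have h1 : F2.verts.ncard = 1 := by omega
      apply hm
      rw [← h2d]
      unfold subDensity
      rw [h1]
      norm_num
    have hv1R : (2 : ℝ) ≤ (F1.verts.ncard : ℝ) := by exact_mod_cast hv1
    have hv2R : (2 : ℝ) ≤ (F2.verts.ncard : ℝ) := by exact_mod_cast hv2
    have hne1 : ((F1.verts.ncard : ℝ) - 1) ≠ 0 := by linarith
    have hne2 : ((F2.verts.ncard : ℝ) - 1) ≠ 0 := by linarith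
    have he1 : (F1.edgeSet.ncard : ℝ) = m1 F * ((F1.verts.ncard : ℝ) - 1) := by
      rw [← h1d]; unfold subDensity; exact (div_mul_cancel₀ _ hne1).symm
    have he2 : (F2.edgeSet.ncard : ℝ) = m1 F * ((F2.verts.ncard : ℝ) - 1) := by
      rw [← h2d]; unfold subDensity; exact (div_mul_cancel₀ _ hne2).symm
    have hmpos : 0 < m1 F := by
      have h0 : 0 ≤ subDensity F1 := by
        unfold subDensity
        apply div_nonneg (by positivity)
        linarith
      rw [h1d] at h0
      exact lt_of_le_of_ne h0 (Ne.symm hm)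
    rcases le_or_gt 2 (F1.verts ∩ F2.verts).ncard with hvI | hvI
    · -- intersection has at least 2 vertices: supermodularity argument
      have hvIR : (2 : ℝ) ≤ ((F1.verts ∩ F2.verts).ncard : ℝ) := by exact_mod_cast hvI
      have hvsum : ((F1.verts ∩ F2.verts).ncard : ℝ) + ((F1.verts ∪ F2.verts).ncard : ℝ)
          = (F1.verts.ncard : ℝ) + (F2.verts.ncard : ℝ) := by
        exact_mod_cast Set.ncard_inter_add_ncard_union F1.verts F2.verts
          (Set.toFinite _) (Set.toFinite _)
      have hesum : ((F1.edgeSet ∩ F2.edgeSet).ncard : ℝ) + ((F1.edgeSet ∪ F2.edgeSet).ncard : ℝ)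
          = (F1.edgeSet.ncard : ℝ) + (F2.edgeSet.ncard : ℝ) := by
        exact_mod_cast Set.ncard_inter_add_ncard_union F1.edgeSet F2.edgeSet
          (Set.toFinite _) (Set.toFinite _)
      have hUv : 2 ≤ (F1 ⊔ F2).verts.ncard := by
        rw [SimpleGraph.Subgraph.verts_sup]
        exact le_trans hv1 (Set.ncard_le_ncard Set.subset_union_left (Set.toFinite _))
      have hU := edge_le F (F1 ⊔ F2) hUv
      rw [SimpleGraph.Subgraph.edgeSet_sup, SimpleGraph.Subgraph.verts_sup] at hU
      have hI := edge_le F (F1 ⊓ F2) (by rw [SimpleGraph.Subgraph.verts_inf]; exact hvI)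
      rw [SimpleGraph.Subgraph.edgeSet_inf, SimpleGraph.Subgraph.verts_inf] at hI
      have heq : ((F1.edgeSet ∩ F2.edgeSet).ncard : ℝ)
          = m1 F * (((F1.verts ∩ F2.verts).ncard : ℝ) - 1) := by
        nlinarith [hU, hI, hesum, hvsum, he1, he2]
      have hK : subDensity (F1 ⊓ F2) = m1 F := by
        have hneI : (((F1.verts ∩ F2.verts).ncard : ℝ) - 1) ≠ 0 := by linarith
        unfold subDensity
        rw [SimpleGraph.Subgraph.edgeSet_inf, SimpleGraph.Subgraph.verts_inf, heq,
          mul_div_assoc, div_self hneI, mul_one]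
      exact (h1min _ hKu hK inf_le_left).symm.trans (h2min _ hKu hK inf_le_right)
    · -- intersection is exactly {u}: use the minimum degree of u
      exfalso
      have hvI1 : (F1.verts ∩ F2.verts).ncard = 1 := by
        have := (Set.ncard_pos (Set.toFinite _)).mpr ⟨u, Set.mem_inter h1u h2u⟩
        omega
      have hS : F1.verts ∩ F2.verts = {u} := by
        obtain ⟨a, ha⟩ := Set.ncard_eq_one.mp hvI1
        have : u ∈ ({a} : Set V) := ha ▸ ⟨h1u, h2u⟩
        rw [ha, Set.mem_singleton_iff.mp this]
      set I1 := {e ∈ F1.edgeSet | u ∈ e} with hI1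
      set I2 := {e ∈ F2.edgeSet | u ∈ e} with hI2
      have hd1 := m1_le_deg F F1 u h1u hv1 he1
      have hd2 := m1_le_deg F F2 u h2u hv2 he2
      have hdisj : Disjoint I1 I2 := by
        rw [Set.disjoint_left]
        intro e he1' he2'
        revert he1' he2'
        induction e using Sym2.ind with
        | _ a b =>
          intro he1' he2'
          obtain ⟨h1e, h1m⟩ := he1'
          obtain ⟨h2e, h2m⟩ := he2'
          rw [SimpleGraph.Subgraph.mem_edgeSet] at h1e h2e
          rcases Sym2.mem_iff.mp h1m with rfl | rfl
          · have hb : b ∈ F1.verts ∩ F2.verts := ⟨h1e.snd_mem, h2e.snd_mem⟩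
            rw [hS, Set.mem_singleton_iff] at hb
            exact h1e.ne hb.symm
          · have ha : a ∈ F1.verts ∩ F2.verts := ⟨h1e.fst_mem, h2e.fst_mem⟩
            rw [hS, Set.mem_singleton_iff] at ha
            exact h1e.ne ha
      have hsubI : I1 ∪ I2 ⊆ F.incidenceSet u := by
        intro e he
        rcases he with he | he
        · exact ⟨F1.edgeSet_subset he.1, he.2⟩
        · exact ⟨F2.edgeSet_subset he.1, he.2⟩
      have hcard : I1.ncard + I2.ncard ≤ (F.incidenceSet u).ncard := by
        rw [← Set.ncard_union_eq hdisj (Set.toFinite _) (Set.toFinite _)]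
        exact Set.ncard_le_ncard hsubI (Set.toFinite _)
      have hinc : (F.incidenceSet u).ncard = F.degree u := by
        rw [← Nat.card_coe_set_eq, Nat.card_eq_fintype_card,
          SimpleGraph.card_incidenceSet_eq_degree]
      -- global edge count
      haveI : Nonempty V := ⟨u⟩
      have hn2 : 2 ≤ Fintype.card V := by
        refine le_trans hv1 ?_
        rw [← Nat.card_eq_fintype_card, ← Set.ncard_univ]
        exact Set.ncard_le_ncard (Set.subset_univ _) (Set.toFinite _)
      have htopv : (⊤ : F.Subgraph).verts.ncard = Fintype.card V := by
        rw [SimpleGraph.Subgraph.verts_top, Set.ncard_univ, Nat.card_eq_fintype_card]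
      have hFle : (F.edgeSet.ncard : ℝ) ≤ m1 F * ((Fintype.card V : ℝ) - 1) := by
        have := edge_le F ⊤ (by rw [htopv]; exact hn2)
        rwa [SimpleGraph.Subgraph.edgeSet_top, htopv] at this
      have hEcard : F.edgeSet.ncard = F.edgeFinset.card := by
        rw [Set.ncard_eq_toFinset_card' F.edgeSet]; congr 1
      have hsum : Fintype.card V * F.minDegree ≤ 2 * F.edgeFinset.card := by
        rw [← SimpleGraph.sum_degrees_eq_twice_card_edges]
        calc Fintype.card V * F.minDegree = ∑ _v : V, F.minDegree := by
              simp [Finset.sum_const, mul_comm]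
          _ ≤ ∑ v, F.degree v := Finset.sum_le_sum fun v _ => F.minDegree_le_degree v
      have hdu : I1.ncard + I2.ncard ≤ F.minDegree := by rw [← hu, ← hinc]; exact hcard
      -- assemble everything over ℝ
      have hduR : (I1.ncard : ℝ) + (I2.ncard : ℝ) ≤ (F.minDegree : ℝ) := by exact_mod_cast hdu
      have hsumR : (Fintype.card V : ℝ) * (F.minDegree : ℝ) ≤ 2 * (F.edgeSet.ncard : ℝ) := by
        rw [hEcard]; exact_mod_cast hsum
      have hnR : (2 : ℝ) ≤ (Fintype.card V : ℝ) := by exact_mod_cast hn2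
      have hmd : 2 * m1 F ≤ (F.minDegree : ℝ) := by linarith
      have hkey : (Fintype.card V : ℝ) * (2 * m1 F) ≤ (Fintype.card V : ℝ) * (F.minDegree : ℝ) :=
        mul_le_mul_of_nonneg_left hmd (by linarith)
      linarith [hkey, hsumR, hFle, hmpos]
end

section
/- Let $F_1$ and $F_2$ be labelled graphs with $V(F_1) \cap V(F_2) = \{v\}$ and $E(F_1) \cap E(F_2) = \emptyset$. Then for any $n \ge 1$ and $p \in (0,1]$, $\Phi_{F_1 \cup F_2}(n,p) \ge \min\{\Phi_{F_1}(n,p), \Phi_{F_2}(n,p), \Phi_{F_1}(n,p)\Phi_{F_2}(n,p)/n\}$. -/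
open Set SimpleGraph

/-- `Φ_F(n,p) = min { n^{v_{F'}} p^{e_{F'}} : F' ⊆ F, e_{F'} > 0 }` for a labelled
graph `F`, modelled as a subgraph of the complete graph on `V`. -/
noncomputable def Phi {V : Type*} [Fintype V]
    (F : (⊤ : SimpleGraph V).Subgraph) (n : ℕ) (p : ℝ) : ℝ :=
  sInf {x : ℝ | ∃ K : (⊤ : SimpleGraph V).Subgraph, K ≤ F ∧ 0 < K.edgeSet.ncard ∧
    x = (n : ℝ) ^ K.verts.ncard * p ^ K.edgeSet.ncard}

/-- if labelled graphs `F₁, F₂` satisfy `V(F₁) ∩ V(F₂) = {v}` and have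
disjoint edge sets, then for `n ≥ 1` and `p ∈ (0,1]`,
`Φ_{F₁ ∪ F₂}(n,p) ≥ min{Φ_{F₁}, Φ_{F₂}, Φ_{F₁}·Φ_{F₂}/n}`. -/
theorem Phi_union_ge_min
    {V : Type*} [Fintype V] (F1 F2 : (⊤ : SimpleGraph V).Subgraph) (v : V)
    (hV : F1.verts ∩ F2.verts = {v}) (hE : F1.edgeSet ∩ F2.edgeSet = ∅)
    (n : ℕ) (hn : 1 ≤ n) (p : ℝ) (hp0 : 0 < p) (hp1 : p ≤ 1) :
    min (min (Phi F1 n p) (Phi F2 n p)) (Phi F1 n p * Phi F2 n p / (n : ℝ))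
      ≤ Phi (F1 ⊔ F2) n p := by
  classical
  have hn0 : (0:ℝ) < n := by exact_mod_cast Nat.lt_of_lt_of_le Nat.zero_lt_one hn
  have hn1 : (1:ℝ) ≤ n := by exact_mod_cast hn
  set S : (⊤ : SimpleGraph V).Subgraph → Set ℝ := fun F =>
    {x : ℝ | ∃ K : (⊤ : SimpleGraph V).Subgraph, K ≤ F ∧ 0 < K.edgeSet.ncard ∧
      x = (n : ℝ) ^ K.verts.ncard * p ^ K.edgeSet.ncard} with hSdef
  have hPhi : ∀ F : (⊤ : SimpleGraph V).Subgraph, Phi F n p = sInf (S F) := fun F => rfl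
  have hbdd : ∀ F, BddBelow (S F) := by
    intro F
    refine ⟨0, ?_⟩
    rintro x ⟨K, -, -, rfl⟩
    positivity
  have hnonneg : ∀ F : (⊤ : SimpleGraph V).Subgraph, 0 ≤ Phi F n p := by
    intro F
    rw [hPhi]
    rcases eq_empty_or_nonempty (S F) with h | h
    · rw [h, Real.sInf_empty]
    · exact le_csInf h (by rintro x ⟨K, -, -, rfl⟩; positivity)
  by_cases hne : (S (F1 ⊔ F2)).Nonempty
  · rw [hPhi]
    refine le_csInf hne ?_
    rintro x ⟨K, hK, hKe, rfl⟩
    set K1 := K ⊓ F1 with hK1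
    set K2 := K ⊓ F2 with hK2
    have hKsub : K.edgeSet ⊆ F1.edgeSet ∪ F2.edgeSet := by
      rw [← Subgraph.edgeSet_sup]; exact Subgraph.edgeSet_mono hK
    have hsplit : K.edgeSet = K1.edgeSet ∪ K2.edgeSet := by
      rw [hK1, hK2, Subgraph.edgeSet_inf, Subgraph.edgeSet_inf,
        ← Set.inter_union_distrib_left, Set.inter_eq_left.mpr hKsub]
    have hdisj : Disjoint K1.edgeSet K2.edgeSet := by
      rw [Set.disjoint_iff_inter_eq_empty]
      apply Set.eq_empty_of_subset_empty
      rw [← hE, hK1, hK2, Subgraph.edgeSet_inf, Subgraph.edgeSet_inf]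
      exact fun e ⟨⟨_, h1⟩, ⟨_, h2⟩⟩ => ⟨h1, h2⟩
    have hcard : K.edgeSet.ncard = K1.edgeSet.ncard + K2.edgeSet.ncard := by
      rw [hsplit]
      exact Set.ncard_union_eq hdisj (Set.toFinite _) (Set.toFinite _)
    have hv1 : K1.verts ⊆ K.verts := by rw [hK1, Subgraph.verts_inf]; exact Set.inter_subset_left
    have hv2 : K2.verts ⊆ K.verts := by rw [hK2, Subgraph.verts_inf]; exact Set.inter_subset_left
    have hmem : ∀ (Ki F : (⊤ : SimpleGraph V).Subgraph), Ki ≤ F → 0 < Ki.edgeSet.ncard →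
        Phi F n p ≤ (n : ℝ) ^ Ki.verts.ncard * p ^ Ki.edgeSet.ncard := by
      intro Ki F hle he
      rw [hPhi]
      exact csInf_le (hbdd F) ⟨Ki, hle, he, rfl⟩
    rcases Nat.eq_zero_or_pos K2.edgeSet.ncard with h2 | h2
    · -- all edges in K1
      have he1 : K.edgeSet.ncard = K1.edgeSet.ncard := by omega
      have h1pos : 0 < K1.edgeSet.ncard := by omega
      refine le_trans (min_le_of_left_le (min_le_left _ _)) ?_
      refine le_trans (hmem K1 F1 inf_le_right h1pos) ?_
      rw [he1]
      gcongr <;> first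
        | exact hn1
        | exact Set.ncard_le_ncard hv1 (Set.toFinite _)
        | exact Set.toFinite _
    rcases Nat.eq_zero_or_pos K1.edgeSet.ncard with h1 | h1
    · have he2 : K.edgeSet.ncard = K2.edgeSet.ncard := by omega
      refine le_trans (min_le_of_left_le (min_le_right _ _)) ?_
      refine le_trans (hmem K2 F2 inf_le_right h2) ?_
      rw [he2]
      gcongr <;> first
        | exact hn1
        | exact Set.ncard_le_ncard hv2 (Set.toFinite _)
        | exact Set.toFinite _
    · -- both have edges
      refine le_trans (min_le_right _ _) ?_
      have hvbound : K1.verts.ncard + K2.verts.ncard ≤ K.verts.ncard + 1 := by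
        have hun : K1.verts ∪ K2.verts ⊆ K.verts := Set.union_subset hv1 hv2
        have hint : K1.verts ∩ K2.verts ⊆ ({v} : Set V) := by
          rw [← hV, hK1, hK2, Subgraph.verts_inf, Subgraph.verts_inf]
          exact fun x ⟨⟨_, a⟩, ⟨_, b⟩⟩ => ⟨a, b⟩
        have h1' : (K1.verts ∪ K2.verts).ncard ≤ K.verts.ncard :=
          Set.ncard_le_ncard hun (Set.toFinite _)
        have h2' : (K1.verts ∩ K2.verts).ncard ≤ 1 := by
          have := Set.ncard_le_ncard hint (Set.toFinite _)
          simpa using this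
        have h3' : (K1.verts ∪ K2.verts).ncard + (K1.verts ∩ K2.verts).ncard
            = K1.verts.ncard + K2.verts.ncard :=
          Set.ncard_union_add_ncard_inter _ _ (Set.toFinite _) (Set.toFinite _)
        omega
      have step1 : Phi F1 n p * Phi F2 n p / n ≤
          ((n:ℝ) ^ K1.verts.ncard * p ^ K1.edgeSet.ncard) *
          ((n:ℝ) ^ K2.verts.ncard * p ^ K2.edgeSet.ncard) / n := by
        gcongr
        all_goals first
        | exact hn1
        | exact hnonneg F1
        | exact hnonneg F2
        | exact hmem K1 F1 inf_le_right h1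
        | exact hmem K2 F2 inf_le_right h2
        | exact le_trans (hnonneg F1) (hmem K1 F1 inf_le_right h1)
        | exact le_trans (hnonneg F2) (hmem K2 F2 inf_le_right h2)
        | exact Set.ncard_le_ncard hv1 (Set.toFinite _)
        | exact Set.toFinite _
        | exact Set.ncard_le_ncard hv2 (Set.toFinite _)
        | exact Set.toFinite _
      refine step1.trans ?_
      have : ((n:ℝ) ^ K1.verts.ncard * p ^ K1.edgeSet.ncard) *
          ((n:ℝ) ^ K2.verts.ncard * p ^ K2.edgeSet.ncard) / n
          = (n:ℝ) ^ (K1.verts.ncard + K2.verts.ncard) *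
            p ^ K.edgeSet.ncard / n := by
        rw [hcard, pow_add, pow_add]; ring
      rw [this, div_le_iff₀ hn0, hcard]
      calc (n:ℝ) ^ (K1.verts.ncard + K2.verts.ncard) *
            p ^ (K1.edgeSet.ncard + K2.edgeSet.ncard)
          ≤ (n:ℝ) ^ (K.verts.ncard + 1) * p ^ (K1.edgeSet.ncard + K2.edgeSet.ncard) := by
            gcongr
        _ = (n:ℝ) ^ K.verts.ncard * p ^ (K1.edgeSet.ncard + K2.edgeSet.ncard) * n := by
            rw [pow_succ]; ring
  · -- S (F1 ⊔ F2) is empty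
    have hS12 : ∀ F, F ≤ F1 ⊔ F2 → S F = ∅ := by
      intro F hF
      apply Set.eq_empty_of_forall_notMem
      rintro x ⟨K, hKle, hKe, rfl⟩
      exact hne ⟨_, ⟨K, hKle.trans hF, hKe, rfl⟩⟩
    have e1 : Phi F1 n p = 0 := by rw [hPhi, hS12 F1 le_sup_left, Real.sInf_empty]
    have e2 : Phi F2 n p = 0 := by rw [hPhi, hS12 F2 le_sup_right, Real.sInf_empty]
    have e3 : Phi (F1 ⊔ F2) n p = 0 := by rw [hPhi, hS12 _ le_rfl, Real.sInf_empty]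
    rw [e1, e2, e3]
    simp
end

section
/- Fix integers $k > \ell \ge 2$ and $M \in (k-\ell)\mathbb{N}$ sufficiently large (in terms of $k$). Let $H'$ be any subgraph of a $k$-uniform $\ell$-path on at most $2M$ vertices, with $v \ge 2$ vertices. Then $e_{H'}/(v-1) \le 1/(k-\ell+\tfrac{1}{2M})$. Consequently, if every component of a $k$-graph $G$ is a subgraph of an $\ell$-path on at most $2M$ vertices, then $m_1(G) \le 1/(k-\ell+\tfrac{1}{2M})$. -/
/-- The `i`-th edge of the `k`-uniform `ℓ`-path on vertex set `Fin s`: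
`{x_{(k-ℓ)i+1}, …, x_{(k-ℓ)i+k}}` (0-indexed). -/
def pathEdge (k l s i : ℕ) : Finset (Fin s) :=
  Finset.univ.filter (fun j => (k - l) * i ≤ (j : ℕ) ∧ (j : ℕ) < (k - l) * i + k)

lemma core_lemma (k l M : ℕ) (hl : 2 ≤ l) (hlk : l < k) (hM : k ≤ M)
    (s : ℕ) (hs : s ≤ 2 * M) (A : Finset (Fin s)) (E : Finset (Finset (Fin s)))
    (hE : ∀ e ∈ E, e ⊆ A ∧ ∃ i, (k - l) * i + k ≤ s ∧ e = pathEdge k l s i)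
    (hA : A.Nonempty) :
    (((k : ℝ) - (l : ℝ)) + 1 / (2 * M)) * E.card ≤ (A.card : ℝ) - 1 := by
  classical
  set t := k - l with ht
  have htpos : 1 ≤ t := by omega
  have hk3 : 3 ≤ k := by omega
  set I : Finset ℕ := (Finset.range (2 * M)).filter
    (fun i => t * i + k ≤ s ∧ pathEdge k l s i ∈ E) with hI
  have hEI : E ⊆ I.image (pathEdge k l s) := by
    intro e he
    obtain ⟨hsub, i, hi, rfl⟩ := hE e he
    refine Finset.mem_image.2 ⟨i, ?_, rfl⟩
    refine Finset.mem_filter.2 ⟨Finset.mem_range.2 ?_, hi, he⟩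
    have : i ≤ t * i := Nat.le_mul_of_pos_left i (by omega)
    omega
  have hEcard : E.card ≤ I.card :=
    le_trans (Finset.card_le_card hEI) Finset.card_image_le
  have hIM : I.card ≤ 2 * M := by
    calc I.card ≤ (Finset.range (2*M)).card := Finset.card_le_card (Finset.filter_subset _ _)
    _ = 2 * M := Finset.card_range _
  -- key counting bound
  have hmemA : ∀ i ∈ I, ∀ j : ℕ, t * i ≤ j → j < t * i + k → j ∈ A.image Fin.val := by
    intro i hi j h1 h2
    obtain ⟨_, hvalid, hmem⟩ := Finset.mem_filter.1 hi
    have hjs : j < s := by omega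
    refine Finset.mem_image.2 ⟨⟨j, hjs⟩, ?_, rfl⟩
    have : (⟨j, hjs⟩ : Fin s) ∈ pathEdge k l s i := by
      simp [pathEdge, ht.symm]
      exact ⟨h1, h2⟩
    exact (hE _ hmem).1 this
  have hbound : I.Nonempty → t * I.card + l ≤ A.card := by
    intro hne
    set imax := I.max' hne with himax
    set J : Finset ℕ := (I.biUnion (fun i => Finset.Ico (t*i) (t*i + t))) ∪
      Finset.Ico (t*imax + t) (t*imax + k) with hJ
    have hJA : J ⊆ A.image Fin.val := by
      intro j hj
      rcases Finset.mem_union.1 hj with hj | hj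
      · obtain ⟨i, hi, hj⟩ := Finset.mem_biUnion.1 hj
        rw [Finset.mem_Ico] at hj
        exact hmemA i hi j hj.1 (by omega)
      · rw [Finset.mem_Ico] at hj
        exact hmemA imax (I.max'_mem hne) j (by omega) hj.2
    have hdisj : ∀ i ∈ I, ∀ i' ∈ I, i ≠ i' →
        Disjoint (Finset.Ico (t*i) (t*i + t)) (Finset.Ico (t*i') (t*i' + t)) := by
      intro i _ i' _ hne'
      apply Finset.disjoint_left.2
      intro j hj hj'
      rw [Finset.mem_Ico] at hj hj'
      rcases Nat.lt_or_ge i i' with h | h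
      · have h2 : t * (i+1) ≤ t * i' := Nat.mul_le_mul_left t h
        rw [Nat.mul_succ] at h2
        omega
      · have h1 : i' < i := by omega
        have h2 : t * (i'+1) ≤ t * i := Nat.mul_le_mul_left t h1
        rw [Nat.mul_succ] at h2
        omega
    have hcard1 : (I.biUnion (fun i => Finset.Ico (t*i) (t*i + t))).card = t * I.card := by
      rw [Finset.card_biUnion hdisj]
      simp [Nat.Ico_eq_range', mul_comm]
    have hdisj2 : Disjoint (I.biUnion (fun i => Finset.Ico (t*i) (t*i + t)))
        (Finset.Ico (t*imax + t) (t*imax + k)) := by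
      apply Finset.disjoint_left.2
      intro j hj hj'
      obtain ⟨i, hi, hj⟩ := Finset.mem_biUnion.1 hj
      rw [Finset.mem_Ico] at hj hj'
      have : i ≤ imax := I.le_max' i hi
      have : t * i ≤ t * imax := Nat.mul_le_mul_left t this
      omega
    have hJcard : J.card = t * I.card + l := by
      rw [hJ, Finset.card_union_of_disjoint hdisj2, hcard1, Nat.card_Ico]
      omega
    calc t * I.card + l = J.card := hJcard.symm
    _ ≤ (A.image Fin.val).card := Finset.card_le_card hJA
    _ = A.card := Finset.card_image_of_injective _ Fin.val_injective
  -- now the real arithmetic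
  have hMpos : (0:ℝ) < 2 * M := by
    have h : 0 < 2*M := by omega
    exact_mod_cast h
  have hcast : ((k:ℝ) - l) = (t:ℝ) := by
    rw [ht]; push_cast [Nat.cast_sub (le_of_lt hlk)]; ring
  rcases Finset.eq_empty_or_nonempty I with hIe | hne
  · have : E = ∅ := by
      apply Finset.eq_empty_of_forall_notMem
      intro e he
      have := hEI he
      simp [hIe] at this
    subst this
    simp only [Finset.card_empty, Nat.cast_zero, mul_zero]
    have : 1 ≤ A.card := Finset.card_pos.2 hA
    have : (1:ℝ) ≤ A.card := by exact_mod_cast this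
    linarith
  · have hm1 : 1 ≤ I.card := Finset.card_pos.2 hne
    have hAc := hbound hne
    have hDpos : (0:ℝ) ≤ (k:ℝ) - l + 1/(2*M) := by
      rw [hcast]
      have h1 : (1:ℝ) ≤ t := by exact_mod_cast htpos
      have h2 : (0:ℝ) ≤ 1/(2*M) := by positivity
      linarith
    have h1 : (((k : ℝ) - (l : ℝ)) + 1 / (2 * M)) * E.card ≤
        (((k : ℝ) - (l : ℝ)) + 1 / (2 * M)) * I.card := by
      apply mul_le_mul_of_nonneg_left _ hDpos
      exact_mod_cast hEcard
    have h2 : (((k : ℝ) - (l : ℝ)) + 1 / (2 * M)) * I.card ≤ (t:ℝ) * I.card + 1 := by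
      rw [hcast]
      have h1 : (I.card : ℝ) / (2*M) ≤ 1 := by
        rw [div_le_one hMpos]; exact_mod_cast hIM
      have h2 : (1/(2*M) : ℝ) * I.card = (I.card:ℝ)/(2*M) := by ring
      rw [add_mul, h2]
      linarith
    have h3 : (t:ℝ) * I.card + l ≤ (A.card : ℝ) := by exact_mod_cast hAc
    have hl2 : (2:ℝ) ≤ l := by exact_mod_cast hl
    linarith

lemma div_form (D x a : ℝ) (hD : 0 < D) (ha : 2 ≤ a) (h : D * x ≤ a - 1) :
    x / (a - 1) ≤ 1 / D := by
  rw [div_le_div_iff₀ (by linarith) hD]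
  linarith [h]

/-- for `k > ℓ ≥ 2` and `M` sufficiently large (in terms of `k`), with
`(k-ℓ) ∣ M`: every subgraph (vertex set `A`, edge set `E`) of a `k`-uniform `ℓ`-path on
`s ≤ 2M` vertices with `|A| ≥ 2` has 1-density at most `1/(k-ℓ+1/(2M))`; consequently,
any `k`-graph all of whose components are subgraphs of `ℓ`-paths on at most `2M` vertices
satisfies `m₁(G) ≤ 1/(k-ℓ+1/(2M))`. -/
theorem density_of_ell_path_subgraphs (k l : ℕ) (hl : 2 ≤ l) (hlk : l < k) :
    ∃ M0 : ℕ, 1 ≤ M0 ∧ ∀ M : ℕ, M0 ≤ M → (k - l) ∣ M →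
      (∀ s : ℕ, s ≤ 2 * M → ∀ A : Finset (Fin s), ∀ E : Finset (Finset (Fin s)),
        (∀ e ∈ E, e ⊆ A ∧ ∃ i, (k - l) * i + k ≤ s ∧ e = pathEdge k l s i) →
        2 ≤ A.card →
        (E.card : ℝ) / ((A.card : ℝ) - 1) ≤ 1 / (((k : ℝ) - (l : ℝ)) + 1 / (2 * M)))
      ∧
      (∀ (V : Type) (W : Finset V) (E : Finset (Finset V))
          (a : ℕ) (parts : Fin a → Finset V),
        (∀ i j, i ≠ j → Disjoint (parts i) (parts j)) →
        (∀ i, parts i ⊆ W) →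
        (∀ x ∈ W, ∃ i, x ∈ parts i) →
        (∀ e ∈ E, ∃ i, e ⊆ parts i) →
        (∀ i, ∃ s : ℕ, s ≤ 2 * M ∧ ∃ f : V → Fin s, Set.InjOn f (parts i) ∧
          ∀ e ∈ E, e ⊆ parts i →
            ∃ idx, (k - l) * idx + k ≤ s ∧ Finset.image f e = pathEdge k l s idx) →
        ∀ A' : Finset V, A' ⊆ W → ∀ E' : Finset (Finset V), E' ⊆ E →
          (∀ e ∈ E', e ⊆ A') → 2 ≤ A'.card →
          (E'.card : ℝ) / ((A'.card : ℝ) - 1) ≤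
            1 / (((k : ℝ) - (l : ℝ)) + 1 / (2 * M))) := by
  classical
  refine ⟨k, by omega, ?_⟩
  intro M hM _
  have hk3 : 3 ≤ k := by omega
  have hMpos : (0:ℝ) < 2 * M := by
    have h : 0 < 2*M := by omega
    exact_mod_cast h
  have hcast : ((k:ℝ) - l) = ((k - l : ℕ):ℝ) := by
    push_cast [Nat.cast_sub (le_of_lt hlk)]; ring
  have hDpos : (0:ℝ) < ((k:ℝ) - l) + 1/(2*M) := by
    have h1 : (1:ℝ) ≤ ((k-l:ℕ):ℝ) := by exact_mod_cast (by omega : 1 ≤ k - l)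
    have h2 : (0:ℝ) ≤ 1/(2*M) := by positivity
    rw [hcast]; linarith
  constructor
  · intro s hs A E hE hA2
    apply div_form _ _ _ hDpos (by exact_mod_cast hA2)
    exact core_lemma k l M hl hlk hM s hs A E hE (Finset.card_pos.1 (by omega))
  · intro V W E a parts hdisj hsubW hcover hedgein hpartpath A' hA'W E' hE'E hE'A' hA'2
    set D := ((k:ℝ) - l) + 1/(2*M) with hD
    apply div_form _ _ _ hDpos (by exact_mod_cast hA'2)
    set Ei : Fin a → Finset (Finset V) := fun i => E'.filter (fun e => e ⊆ parts i) with hEi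
    set Ai : Fin a → Finset V := fun i => A' ∩ parts i with hAi
    set S : Finset (Fin a) := Finset.univ.filter (fun i => (Ei i).Nonempty) with hS
    have hcov : E' ⊆ S.biUnion Ei := by
      intro e he
      obtain ⟨i, hi⟩ := hedgein e (hE'E he)
      have hei : e ∈ Ei i := Finset.mem_filter.2 ⟨he, hi⟩
      exact Finset.mem_biUnion.2 ⟨i, Finset.mem_filter.2 ⟨Finset.mem_univ _, ⟨e, hei⟩⟩, hei⟩
    have hkey : ∀ i ∈ S, D * (Ei i).card ≤ ((Ai i).card:ℝ) - 1 := by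
      intro i hiS
      obtain ⟨s, hs, f, hinj, hf⟩ := hpartpath i
      have hAisub : (Ai i : Set V) ⊆ (parts i : Set V) := by
        intro x hx; exact Finset.mem_coe.2 (Finset.mem_of_mem_inter_right (Finset.mem_coe.1 hx))
      have hAicard : ((Ai i).image f).card = (Ai i).card :=
        Finset.card_image_of_injOn (hinj.mono hAisub)
      have hsubkey : ∀ e1 e2 : Finset V, e1 ⊆ parts i → e2 ⊆ parts i →
          Finset.image f e1 = Finset.image f e2 → e1 ⊆ e2 := by
        intro e1 e2 h1 h2 heq x hx
        have hfx : f x ∈ Finset.image f e2 := heq ▸ Finset.mem_image_of_mem f hx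
        obtain ⟨y, hy, hfy⟩ := Finset.mem_image.1 hfx
        rwa [hinj (h2 hy) (h1 hx) hfy] at hy
      have hEicard : ((Ei i).image (Finset.image f)).card = (Ei i).card := by
        apply Finset.card_image_of_injOn
        intro e1 h1 e2 h2 heq
        have hp1 : e1 ⊆ parts i := (Finset.mem_filter.1 h1).2
        have hp2 : e2 ⊆ parts i := (Finset.mem_filter.1 h2).2
        exact Finset.Subset.antisymm (hsubkey e1 e2 hp1 hp2 heq)
          (hsubkey e2 e1 hp2 hp1 heq.symm)
      have hhyp : ∀ e' ∈ (Ei i).image (Finset.image f),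
          e' ⊆ (Ai i).image f ∧ ∃ idx, (k - l) * idx + k ≤ s ∧ e' = pathEdge k l s idx := by
        intro e' he'
        obtain ⟨e, he, rfl⟩ := Finset.mem_image.1 he'
        have heE' : e ∈ E' := (Finset.mem_filter.1 he).1
        have hep : e ⊆ parts i := (Finset.mem_filter.1 he).2
        have heAi : e ⊆ Ai i := Finset.subset_inter (hE'A' e heE') hep
        obtain ⟨idx, hidx, heq⟩ := hf e (hE'E heE') hep
        exact ⟨Finset.image_subset_image heAi, idx, hidx, heq⟩
      have hne : ((Ai i).image f).Nonempty := by
        obtain ⟨e, he⟩ := (Finset.mem_filter.1 hiS).2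
        have heE' : e ∈ E' := (Finset.mem_filter.1 he).1
        have hep : e ⊆ parts i := (Finset.mem_filter.1 he).2
        obtain ⟨idx, hidx, heq⟩ := hf e (hE'E heE') hep
        have : ((⟨(k-l)*idx, by omega⟩ : Fin s)) ∈ pathEdge k l s idx := by
          simp [pathEdge]; omega
        rw [← heq] at this
        obtain ⟨x, hx, _⟩ := Finset.mem_image.1 this
        exact ⟨f x, Finset.mem_image_of_mem f
          (Finset.subset_inter (hE'A' e heE') hep hx)⟩
      have := core_lemma k l M hl hlk hM s hs ((Ai i).image f)
        ((Ei i).image (Finset.image f)) hhyp hne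
      rw [hEicard, hAicard] at this
      exact this
    rcases Finset.eq_empty_or_nonempty S with hSe | hSne
    · have : E' = ∅ := by
        rw [hSe] at hcov; simpa using Finset.subset_empty.1 hcov
      subst this
      have : (2:ℝ) ≤ A'.card := by exact_mod_cast hA'2
      simp only [Finset.card_empty, Nat.cast_zero, mul_zero]
      linarith
    · have hAdisj : ∀ i ∈ S, ∀ j ∈ S, i ≠ j → Disjoint (Ai i) (Ai j) := by
        intro i _ j _ hij
        exact (hdisj i j hij).mono Finset.inter_subset_right Finset.inter_subset_right
      have hAsum : ∑ i ∈ S, (Ai i).card ≤ A'.card := by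
        rw [← Finset.card_biUnion hAdisj]
        apply Finset.card_le_card
        intro x hx
        obtain ⟨i, _, hxi⟩ := Finset.mem_biUnion.1 hx
        exact Finset.mem_of_mem_inter_left hxi
      have hScard : 1 ≤ S.card := Finset.card_pos.2 hSne
      have hsum : ∑ i ∈ S, (((Ai i).card:ℝ) - 1) ≤ (A'.card:ℝ) - 1 := by
        rw [Finset.sum_sub_distrib, Finset.sum_const, nsmul_eq_mul, mul_one]
        have h1 : (∑ i ∈ S, ((Ai i).card:ℝ)) ≤ (A'.card:ℝ) := by
          rw [← Nat.cast_sum]; exact_mod_cast hAsum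
        have h2 : (1:ℝ) ≤ S.card := by exact_mod_cast hScard
        linarith
      have hE'card : (E'.card:ℝ) ≤ ∑ i ∈ S, ((Ei i).card:ℝ) := by
        rw [← Nat.cast_sum]
        exact_mod_cast le_trans (Finset.card_le_card hcov) (Finset.card_biUnion_le)
      calc D * E'.card ≤ D * ∑ i ∈ S, ((Ei i).card:ℝ) :=
            mul_le_mul_of_nonneg_left hE'card hDpos.le
      _ = ∑ i ∈ S, D * ((Ei i).card:ℝ) := Finset.mul_sum _ _ _
      _ ≤ ∑ i ∈ S, (((Ai i).card:ℝ) - 1) := Finset.sum_le_sum hkey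
      _ ≤ (A'.card:ℝ) - 1 := hsum
end

section
/- Let $k \ge 2$, $r \ge 2$, and let $v$ satisfy $2 \le v \le k+r-1$. Then the complete $k$-graph on $v$ vertices satisfies $\binom{v}{k}/(v-1) \le (k+r-1)(k+r-3)(k+r-4)\cdots r / k!$, and for $M$ sufficiently large in terms of $k,r$, this is at most $\binom{k+r-2}{k-1} - 1/(2M)$. -/
lemma step_lemma (k v : ℕ) (hk : 2 ≤ k) (hv : 2 ≤ v) :
    (Nat.choose v k : ℝ) / ((v : ℝ) - 1) ≤ (Nat.choose (v+1) k : ℝ) / (v : ℝ) := by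
  have hv' : (2:ℝ) ≤ (v:ℝ) := by exact_mod_cast hv
  have ha : (0:ℝ) ≤ (Nat.choose v k : ℝ) := by positivity
  have hb : (0:ℝ) ≤ (Nat.choose (v+1) k : ℝ) := by positivity
  rcases le_or_gt k v with h | h
  · have hid := Nat.choose_mul_succ_eq v k
    have h1 : k ≤ v + 1 := le_trans h (Nat.le_succ v)
    have hcast : ((Nat.choose v k : ℝ)) * ((v:ℝ)+1) =
        (Nat.choose (v+1) k : ℝ) * ((v:ℝ)+1 - (k:ℝ)) := by
      exact_mod_cast congrArg (Nat.cast (R := ℝ)) hid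
    have hk' : (2:ℝ) ≤ (k:ℝ) := by exact_mod_cast hk
    have hkv : (k:ℝ) ≤ (v:ℝ) := by exact_mod_cast h
    rw [div_le_div_iff₀ (by linarith) (by linarith)]
    nlinarith [mul_nonneg ha (sub_nonneg.mpr hkv)]
  · rw [Nat.choose_eq_zero_of_lt h]
    simp only [Nat.cast_zero, zero_div]
    positivity

lemma mono_lemma (k : ℕ) (hk : 2 ≤ k) : ∀ m n : ℕ, 2 ≤ m → m ≤ n →
    (Nat.choose m k : ℝ) / ((m : ℝ) - 1) ≤ (Nat.choose n k : ℝ) / ((n : ℝ) - 1) := by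
  intro m n hm hmn
  induction n, hmn using Nat.le_induction with
  | base => exact le_refl _
  | succ n hn ih =>
    refine le_trans ih ?_
    have hn2 : 2 ≤ n := le_trans hm hn
    have := step_lemma k n hk hn2
    push_cast
    convert this using 2
    · rfl
    ring

/-- for `k, r ≥ 2` and `2 ≤ v ≤ k+r-1`, the 1-density of the complete
`k`-graph on `v` vertices satisfies
`C(v,k)/(v-1) ≤ (k+r-1)(k+r-3)(k+r-4)⋯r / k!`, and for `M` sufficiently large (in
terms of `k, r`) the right-hand side is at most `C(k+r-2,k-1) - 1/(2M)`.
(The product `(k+r-1)(k+r-3)(k+r-4)⋯r` is written as `(k+r-1)·(k+r-3)!/(r-1)!`.) -/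
theorem complete_kgraph_density_bound (k r : ℕ) (hk : 2 ≤ k) (hr : 2 ≤ r) :
    (∀ v : ℕ, 2 ≤ v → v ≤ k + r - 1 →
      (Nat.choose v k : ℝ) / ((v : ℝ) - 1) ≤
        ((k : ℝ) + (r : ℝ) - 1) * (Nat.factorial (k + r - 3) : ℝ)
          / (Nat.factorial (r - 1) : ℝ) / (Nat.factorial k : ℝ)) ∧
    (∃ M0 : ℕ, 1 ≤ M0 ∧ ∀ M : ℕ, M0 ≤ M →
      ((k : ℝ) + (r : ℝ) - 1) * (Nat.factorial (k + r - 3) : ℝ)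
          / (Nat.factorial (r - 1) : ℝ) / (Nat.factorial k : ℝ) ≤
        (Nat.choose (k + r - 2) (k - 1) : ℝ) - 1 / (2 * (M : ℝ))) := by
  obtain ⟨s, hs⟩ : ∃ s, k + r = s + 4 := ⟨k + r - 4, by omega⟩
  have h1 : k + r - 1 = s + 3 := by omega
  have h2 : k + r - 2 = s + 2 := by omega
  have h3 : k + r - 3 = s + 1 := by omega
  have hRcast : (k:ℝ) + (r:ℝ) - 1 = (s:ℝ) + 3 := by
    have : ((k : ℝ) + (r : ℝ)) = (s : ℝ) + 4 := by exact_mod_cast hs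
    linarith
  rw [h1, h2, h3, hRcast]
  -- positivity facts
  have Fk : (0:ℝ) < (Nat.factorial k : ℝ) := by exact_mod_cast k.factorial_pos
  have Fr : (0:ℝ) < (Nat.factorial (r-1) : ℝ) := by exact_mod_cast (r-1).factorial_pos
  have Fk1 : (0:ℝ) < (Nat.factorial (k-1) : ℝ) := by exact_mod_cast (k-1).factorial_pos
  have Fs : (0:ℝ) < (Nat.factorial (s+1) : ℝ) := by exact_mod_cast (s+1).factorial_pos
  -- C(s+3,k) identity
  have hkle : k ≤ s + 3 := by omega
  have hC : Nat.choose (s+3) k * Nat.factorial k * Nat.factorial (r-1) =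
      (s+3) * ((s+2) * Nat.factorial (s+1)) := by
    have := Nat.choose_mul_factorial_mul_factorial hkle
    have hsub : s + 3 - k = r - 1 := by omega
    rw [hsub] at this
    rw [this]
    show Nat.factorial (s+3) = _
    rw [Nat.factorial_succ, Nat.factorial_succ]
  have hCc : (Nat.choose (s+3) k : ℝ) * (Nat.factorial k : ℝ) * (Nat.factorial (r-1) : ℝ) =
      ((s:ℝ)+3) * (((s:ℝ)+2) * (Nat.factorial (s+1) : ℝ)) := by exact_mod_cast hC
  -- value at top
  have htop : (Nat.choose (s+3) k : ℝ) / (((s+3 : ℕ):ℝ) - 1) =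
      ((s:ℝ) + 3) * (Nat.factorial (s+1) : ℝ) / (Nat.factorial (r-1) : ℝ)
        / (Nat.factorial k : ℝ) := by
    push_cast
    have hs2 : (0:ℝ) < (s:ℝ) + 2 := by positivity
    rw [div_div, div_eq_div_iff (by push_cast; linarith) (by positivity)]
    push_cast
    linear_combination hCc
  constructor
  · intro v hv2 hvle
    calc (Nat.choose v k : ℝ) / ((v : ℝ) - 1)
        ≤ (Nat.choose (s+3) k : ℝ) / (((s+3:ℕ) : ℝ) - 1) :=
          mono_lemma k hk v (s+3) hv2 hvle
      _ = _ := htop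
  · -- the strict gap
    have hk1 : k - 1 ≤ s + 2 := by omega
    have hC' : Nat.choose (s+2) (k-1) * Nat.factorial (k-1) * Nat.factorial (r-1) =
        (s+2) * Nat.factorial (s+1) := by
      have := Nat.choose_mul_factorial_mul_factorial hk1
      have hsub : s + 2 - (k-1) = r - 1 := by omega
      rw [hsub] at this
      rw [this]
      show Nat.factorial (s+2) = _
      rw [Nat.factorial_succ]
    have hC'c : (Nat.choose (s+2) (k-1) : ℝ) * (Nat.factorial (k-1) : ℝ) *
        (Nat.factorial (r-1) : ℝ) = ((s:ℝ)+2) * (Nat.factorial (s+1) : ℝ) := by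
      exact_mod_cast hC'
    have hkfac : (Nat.factorial k : ℝ) = (k:ℝ) * (Nat.factorial (k-1) : ℝ) := by
      obtain ⟨m, hm⟩ : ∃ m, k = m + 1 := ⟨k-1, by omega⟩
      subst hm
      simp only [Nat.add_sub_cancel, Nat.factorial_succ]
      push_cast
      ring
    have hk' : (2:ℝ) ≤ (k:ℝ) := by exact_mod_cast hk
    set R : ℝ := ((s:ℝ) + 3) * (Nat.factorial (s+1) : ℝ) / (Nat.factorial (r-1) : ℝ)
        / (Nat.factorial k : ℝ) with hR
    set C' : ℝ := (Nat.choose (s+2) (k-1) : ℝ) with hCdef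
    have hlt : R < C' := by
      rw [hR, div_div, div_lt_iff₀ (by positivity)]
      have key : C' * ((Nat.factorial (r-1) : ℝ) * (Nat.factorial k : ℝ)) =
          (k:ℝ) * (((s:ℝ)+2) * (Nat.factorial (s+1) : ℝ)) := by
        rw [hkfac]; linear_combination (k:ℝ) * hC'c
      rw [key]
      nlinarith [mul_nonneg (sub_nonneg.mpr hk')
          (mul_nonneg (by positivity : (0:ℝ) ≤ (s:ℝ)+2) Fs.le),
        mul_pos Fs (by positivity : (0:ℝ) < (s:ℝ)+1)]
    set ε : ℝ := C' - R with hε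
    have hεpos : 0 < ε := sub_pos.mpr hlt
    obtain ⟨M0, hM0⟩ := exists_nat_gt (1 / (2 * ε))
    refine ⟨max M0 1, le_max_right _ _, ?_⟩
    intro M hM
    have hM1 : 1 ≤ M := le_trans (le_max_right _ _) hM
    have hM0' : (M0 : ℝ) ≤ (M : ℝ) := by exact_mod_cast le_trans (le_max_left _ _) hM
    have hMpos : (0:ℝ) < (M:ℝ) := by exact_mod_cast hM1
    have h1' : 1 < (M0:ℝ) * (2*ε) := (div_lt_iff₀ (by positivity)).mp hM0
    have h2' : (M0:ℝ) * (2*ε) ≤ (M:ℝ) * (2*ε) :=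
      mul_le_mul_of_nonneg_right hM0' (by positivity)
    have hle : 1 / (2 * (M:ℝ)) ≤ ε := by
      rw [div_le_iff₀ (by positivity)]
      nlinarith
    linarith [hle]
end

section
/- Let $k \ge 3$, $r \ge 2$, and $k+r \le v \le M\binom{k+r-2}{k-1}+1$ for a large integer $M$. If $H'$ is a $v$-vertex subgraph of an $r$-th power of a $k$-uniform tight path, then $e_{H'} \le \binom{k+r-1}{k} + (v-(k+r-1))\binom{k+r-2}{k-1}$, and consequently $e_{H'}/(v-1) \le \binom{k+r-2}{k-1} - 1/(2M)$. -/
/-- The window of `k+r-1` consecutive vertices of `Fin s` starting at position `q`. -/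
def pathWindow (s k r q : ℕ) : Finset (Fin s) :=
  Finset.univ.filter (fun j => q ≤ (j : ℕ) ∧ (j : ℕ) < q + (k + r - 1))

/-- Edges of the `r`-th power of the `k`-uniform tight path on `Fin s`: all `k`-subsets
of a window of `k+r-1` consecutive vertices. -/
def tightPathPowerEdges (s k r : ℕ) : Set (Finset (Fin s)) :=
  {e | e.card = k ∧ ∃ q, q + (k + r - 1) ≤ s ∧ e ⊆ pathWindow s k r q}

open scoped Classical in
lemma edge_count (s k r : ℕ) (hk : 3 ≤ k) (hr : 2 ≤ r) (A : Finset (Fin s)) :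
    ((A.powersetCard k).filter (· ∈ tightPathPowerEdges s k r)).card ≤
      (k+r-1).choose k + (A.card - (k+r-1)) * (k+r-2).choose (k-1) := by
  induction A using Finset.strongInductionOn with
  | _ A ih =>
    by_cases hcard : A.card ≤ k + r - 1
    · calc ((A.powersetCard k).filter (· ∈ tightPathPowerEdges s k r)).card
          ≤ (A.powersetCard k).card := Finset.card_le_card (Finset.filter_subset _ _)
        _ = A.card.choose k := Finset.card_powersetCard k A
        _ ≤ (k+r-1).choose k := Nat.choose_le_choose k hcard
        _ ≤ _ := Nat.le_add_right _ _
    · push_neg at hcard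
      have hA : A.Nonempty := Finset.card_pos.mp (by omega)
      set m := A.max' hA with hm
      have hmA : m ∈ A := A.max'_mem hA
      set F := ((A.powersetCard k).filter (· ∈ tightPathPowerEdges s k r)) with hF
      have hsplit : (F.filter (fun e => m ∈ e)).card + (F.filter (fun e => m ∉ e)).card
          = F.card := Finset.card_filter_add_card_filter_not _
      set p := (A.card - 1 - (k+r-1)) * (k+r-2).choose (k-1) with hp
      -- edges not containing m
      have h2 : (F.filter (fun e => m ∉ e)).card ≤ (k+r-1).choose k + p := by
        have hsub : F.filter (fun e => m ∉ e) ⊆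
            (((A.erase m).powersetCard k).filter (· ∈ tightPathPowerEdges s k r)) := by
          intro e he
          simp only [hF, Finset.mem_filter, Finset.mem_powersetCard] at he ⊢
          exact ⟨⟨fun x hx => Finset.mem_erase.mpr
            ⟨by rintro rfl; exact he.2 hx, he.1.1.1 hx⟩, he.1.1.2⟩, he.1.2⟩
        calc _ ≤ _ := Finset.card_le_card hsub
          _ ≤ (k+r-1).choose k + p := by
              have h := ih (A.erase m) (Finset.erase_ssubset hmA)
              rwa [Finset.card_erase_of_mem hmA] at h
      -- edges containing m
      have h1 : (F.filter (fun e => m ∈ e)).card ≤ (k+r-2).choose (k-1) := by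
        set B := Finset.univ.filter
          (fun j : Fin s => (j:ℕ) < (m:ℕ) ∧ (m:ℕ) < (j:ℕ) + (k+r-1)) with hB
        have hBcard : B.card ≤ k + r - 2 := by
          have := Finset.card_le_card_of_injOn (fun j : Fin s => (m:ℕ) - (j:ℕ) - 1)
            (s := B) (t := Finset.range (k+r-2)) ?_ ?_
          · simpa [Finset.card_range] using this
          · intro j hj
            simp only [hB, Finset.mem_coe, Finset.mem_filter] at hj
            simp only [Finset.mem_coe, Finset.mem_range]
            omega
          · intro j hj j' hj' hjj
            simp only [hB, Finset.coe_filter, Set.mem_setOf_eq] at hj hj'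
            simp only at hjj
            exact Fin.ext (by omega)
        calc (F.filter (fun e => m ∈ e)).card ≤ (B.powersetCard (k-1)).card := by
              apply Finset.card_le_card_of_injOn (fun e => e.erase m)
              · intro e he
                simp only [hF, Finset.mem_coe, Finset.mem_filter, Finset.mem_powersetCard] at he
                obtain ⟨⟨⟨heA, hek⟩, hk', q, hq, hw⟩, hme⟩ := he
                rw [Finset.mem_coe, Finset.mem_powersetCard]
                constructor
                · intro x hx
                  rw [Finset.mem_erase] at hx
                  obtain ⟨hxm, hxe⟩ := hx
                  simp only [hB, Finset.mem_filter, Finset.mem_univ, true_and]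
                  have hxA := heA hxe
                  have hxle : x ≤ m := A.le_max' x hxA
                  have hxlt : (x:ℕ) < (m:ℕ) :=
                    lt_of_le_of_ne (by exact_mod_cast hxle) (fun h => hxm (Fin.ext h))
                  have hmw := hw hme
                  have hxw := hw hxe
                  simp only [pathWindow, Finset.mem_filter, Finset.mem_univ, true_and]
                    at hmw hxw
                  omega
                · rw [Finset.card_erase_of_mem hme, hk']
              · intro e he e' he' hee
                simp only [Finset.coe_filter, Set.mem_setOf_eq] at he he'
                have i1 := Finset.insert_erase he.2
                have i2 := Finset.insert_erase he'.2
                rw [← i1, ← i2]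
                simp only at hee
                rw [hee]
          _ = Nat.choose B.card (k-1) := Finset.card_powersetCard _ _
          _ ≤ _ := Nat.choose_le_choose _ hBcard
      have key : A.card - (k+r-1) = (A.card - 1 - (k+r-1)) + 1 := by omega
      have expand : (A.card - (k+r-1)) * (k+r-2).choose (k-1) = p + (k+r-2).choose (k-1) := by
        rw [key, hp]; ring
      rw [expand]
      omega

/-- for `k ≥ 3`, `r ≥ 2` and `k+r ≤ v ≤ M·C(k+r-2,k-1)+1`, every
`v`-vertex subgraph `H'` of an `r`-th power of a `k`-uniform tight path satisfies
`e_{H'} ≤ C(k+r-1,k) + (v-(k+r-1))·C(k+r-2,k-1)`, and consequently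
`e_{H'}/(v-1) ≤ C(k+r-2,k-1) - 1/(2M)`. -/
theorem power_tight_path_subgraph_density
    (k r M s v : ℕ) (hk : 3 ≤ k) (hr : 2 ≤ r) (hM : 1 ≤ M)
    (hv1 : k + r ≤ v) (hv2 : v ≤ M * Nat.choose (k + r - 2) (k - 1) + 1)
    (A : Finset (Fin s)) (hA : A.card = v)
    (E' : Set (Finset (Fin s))) (hE' : E' ⊆ tightPathPowerEdges s k r)
    (hEA : ∀ e ∈ E', e ⊆ A) :
    ((E'.ncard : ℝ) ≤ (Nat.choose (k + r - 1) k : ℝ) +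
        ((v : ℝ) - ((k : ℝ) + (r : ℝ) - 1)) * (Nat.choose (k + r - 2) (k - 1) : ℝ)) ∧
    (E'.ncard : ℝ) / ((v : ℝ) - 1) ≤
      (Nat.choose (k + r - 2) (k - 1) : ℝ) - 1 / (2 * (M : ℝ)) := by
  classical
  set F := ((A.powersetCard k).filter (· ∈ tightPathPowerEdges s k r)) with hF
  have hEF : E' ⊆ ↑F := by
    intro e he
    have hm := hE' he
    obtain ⟨hek, hq⟩ := hm
    simp only [hF, Finset.coe_filter, Set.mem_setOf_eq, Finset.mem_powersetCard]
    exact ⟨⟨hEA e he, hek⟩, hek, hq⟩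
  have hncard : E'.ncard ≤ F.card := by
    have := Set.ncard_le_ncard hEF (Finset.finite_toSet F)
    rwa [Set.ncard_coe_finset] at this
  have hcount := edge_count s k r hk hr A
  rw [hA] at hcount
  have htot : E'.ncard ≤ (k+r-1).choose k + (v - (k+r-1)) * (k+r-2).choose (k-1) :=
    le_trans hncard hcount
  -- cast to ℝ
  have hsub : ((v - (k+r-1) : ℕ) : ℝ) = (v:ℝ) - ((k:ℝ) + (r:ℝ) - 1) := by
    rw [Nat.cast_sub (by omega), Nat.cast_sub (by omega : 1 ≤ k + r)]
    push_cast; ring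
  have part1 : (E'.ncard : ℝ) ≤ (Nat.choose (k + r - 1) k : ℝ) +
      ((v : ℝ) - ((k : ℝ) + (r : ℝ) - 1)) * (Nat.choose (k + r - 2) (k - 1) : ℝ) := by
    calc (E'.ncard : ℝ) ≤ (((k+r-1).choose k + (v - (k+r-1)) * (k+r-2).choose (k-1) : ℕ) : ℝ) :=
          by exact_mod_cast htot
      _ = _ := by push_cast [hsub]; ring
  refine ⟨part1, ?_⟩
  -- part 2
  set c1 : ℝ := (Nat.choose (k + r - 1) k : ℝ) with hc1
  set c2 : ℝ := (Nat.choose (k + r - 2) (k - 1) : ℝ) with hc2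
  have hkey : (k:ℝ) * c1 = ((k:ℝ) + (r:ℝ) - 1) * c2 := by
    have h := Nat.add_one_mul_choose_eq (k+r-2) (k-1)
    have hn : k + r - 2 + 1 = k + r - 1 := by omega
    have hj : k - 1 + 1 = k := by omega
    rw [hn, hj] at h
    have : ((k+r-1) * (k+r-2).choose (k-1) : ℕ) = ((k+r-1).choose k * k : ℕ) := h
    have hcast : ((k + r - 1 : ℕ) : ℝ) = (k:ℝ) + (r:ℝ) - 1 := by
      rw [Nat.cast_sub (by omega : 1 ≤ k + r)]; push_cast; ring
    have := congrArg (fun n : ℕ => (n : ℝ)) this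
    push_cast at this
    rw [hcast] at this
    rw [hc1, hc2]; linarith
  have hc2pos : (0:ℝ) < c2 := by
    rw [hc2]
    exact_mod_cast Nat.choose_pos (by omega : k - 1 ≤ k + r - 2)
  have hvpos : (0:ℝ) < (v:ℝ) - 1 := by
    have : (5:ℕ) ≤ v := by omega
    have : (5:ℝ) ≤ (v:ℝ) := by exact_mod_cast this
    linarith
  have hv2r : (v:ℝ) - 1 ≤ (M:ℝ) * c2 := by
    have : (v:ℝ) ≤ (M:ℝ) * c2 + 1 := by
      rw [hc2]; exact_mod_cast hv2
    linarith
  have hMpos : (0:ℝ) < (M:ℝ) := by exact_mod_cast hM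
  rw [div_le_iff₀ hvpos]
  have hkR : (3:ℝ) ≤ (k:ℝ) := by exact_mod_cast hk
  have hrR : (2:ℝ) ≤ (r:ℝ) := by exact_mod_cast hr
  -- hint: (k+r-2)*c2 - c1 ≥ c2/2
  have hint : c2 / 2 ≤ ((k:ℝ) + (r:ℝ) - 2) * c2 - c1 := by
    have hkpos : (0:ℝ) < (k:ℝ) := by linarith
    rw [div_le_iff₀ (by norm_num : (0:ℝ) < 2)]
    nlinarith [hkey, hc2pos]
  have hdiv : ((v:ℝ) - 1) / (2 * (M:ℝ)) ≤ c2 / 2 := by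
    rw [div_le_div_iff₀ (by positivity) (by norm_num)]
    nlinarith [hv2r]
  have goal2 : c1 + ((v:ℝ) - ((k:ℝ) + (r:ℝ) - 1)) * c2 ≤ (c2 - 1 / (2 * (M:ℝ))) * ((v:ℝ) - 1) := by
    have expand : (c2 - 1 / (2 * (M:ℝ))) * ((v:ℝ) - 1)
        = c2 * ((v:ℝ) - 1) - ((v:ℝ) - 1) / (2 * (M:ℝ)) := by
      field_simp
    rw [expand]
    have e1 : c2 * ((v:ℝ) - 1) - ((v:ℝ) - ((k:ℝ) + (r:ℝ) - 1)) * c2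
        = ((k:ℝ) + (r:ℝ) - 2) * c2 := by ring
    linarith [hint, hdiv, e1]
  calc (E'.ncard : ℝ) ≤ c1 + ((v:ℝ) - ((k:ℝ) + (r:ℝ) - 1)) * c2 := part1
    _ ≤ _ := goal2
end

section
/- Suppose a probability distribution $\mu$ on injections $\varphi: X \to Y$ is constructed in two stages: first the images of a subset $X_0 \subseteq X$ are chosen so that conditionally on any partial assignment, each subsequent vertex of $X_0$ has at least $n/C$ available choices and is chosen uniformly among them; then the remaining vertices $X \setminus X_0$ are assigned a uniformly random injection into the unused elements of $Y$, where $|Y| = n$ and at least $n/C'$ elements remain unused with $e \cdot C' \le C$. Then $\mu$ is $(C/n)$-vertex-spread: for all distinct $x_1,\ldots,x_s \in X$ and distinct $y_1,\ldots,y_s \in Y$, $\mu(\{\varphi : \varphi(x_i)=y_i \ \forall i \in [s]\}) \le (C/n)^s$. -/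
open scoped Classical

lemma aux_pow_le_exp_mul_factorial (t : ℕ) : (t:ℝ)^t ≤ Real.exp 1 ^ t * t.factorial := by
  induction t with
  | zero => simp
  | succ t ih =>
    have he : (0:ℝ) < Real.exp 1 := Real.exp_pos 1
    have h1 : ((t:ℝ)+1)^t ≤ Real.exp 1 * (t:ℝ)^t := by
      rcases Nat.eq_zero_or_pos t with h | h
      · subst h; simpa using he.le
      · have ht : (0:ℝ) < t := by exact_mod_cast h
        have : ((t:ℝ)+1)/t ≤ Real.exp (1/t) := by
          have := Real.add_one_le_exp (1/(t:ℝ))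
          calc ((t:ℝ)+1)/t = 1/(t:ℝ) + 1 := by field_simp; ring
          _ ≤ Real.exp (1/t) := this
        have h2 : (((t:ℝ)+1)/t)^t ≤ Real.exp (1/(t:ℝ))^t := by
          apply pow_le_pow_left₀ (by positivity) this
        have h3 : Real.exp (1/(t:ℝ))^t = Real.exp 1 := by
          rw [← Real.exp_nat_mul]
          congr 1
          field_simp
        have h4 : (((t:ℝ)+1)/t)^t * (t:ℝ)^t = ((t:ℝ)+1)^t := by
          rw [div_pow]
          field_simp
        calc ((t:ℝ)+1)^t = (((t:ℝ)+1)/t)^t * (t:ℝ)^t := h4.symm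
        _ ≤ Real.exp 1 * (t:ℝ)^t := by
            apply mul_le_mul_of_nonneg_right _ (by positivity)
            rw [← h3]; exact h2
    have := mul_le_mul_of_nonneg_left ih he.le
    have hc : ((t+1:ℕ):ℝ)^(t+1) = ((t:ℝ)+1) * ((t:ℝ)+1)^t := by push_cast; ring
    rw [hc]
    calc ((t:ℝ)+1) * ((t:ℝ)+1)^t = ((t:ℝ)+1) * ((t:ℝ)+1)^t := rfl
    _ ≤ ((t:ℝ)+1) * (Real.exp 1 * (t:ℝ)^t) := by
        apply mul_le_mul_of_nonneg_left h1 (by positivity)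
    _ ≤ ((t:ℝ)+1) * (Real.exp 1 * (Real.exp 1 ^ t * t.factorial)) := by
        apply mul_le_mul_of_nonneg_left _ (by positivity)
        exact mul_le_mul_of_nonneg_left ih he.le
    _ = Real.exp 1 ^ (t+1) * ((t+1).factorial) := by
        rw [Nat.factorial_succ]; push_cast; ring

lemma aux_prod_range_sub_factorial (t : ℕ) : ∏ j ∈ Finset.range t, (t - j) = t.factorial := by
  induction t with
  | zero => simp
  | succ t ih =>
    rw [Finset.prod_range_succ', Nat.factorial_succ]
    simp only [Nat.succ_sub_succ]
    rw [ih]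
    simp [Nat.mul_comm]

lemma aux_prod_ge (t m : ℕ) (h : t ≤ m) :
    ((m:ℝ)/Real.exp 1)^t ≤ ∏ j ∈ Finset.range t, ((m:ℝ) - j) := by
  rcases Nat.eq_zero_or_pos t with h0 | h0
  · subst h0; simp
  have ht : (0:ℝ) < t := by exact_mod_cast h0
  have he : (0:ℝ) < Real.exp 1 := Real.exp_pos 1
  have hfac : ((t:ℝ)/Real.exp 1)^t ≤ (t.factorial : ℝ) := by
    rw [div_pow, div_le_iff₀ (by positivity)]
    calc (t:ℝ)^t ≤ Real.exp 1 ^ t * t.factorial := aux_pow_le_exp_mul_factorial t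
    _ = (t.factorial:ℝ) * Real.exp 1 ^ t := by ring
  have hAB : ∏ j ∈ Finset.range t, ((m:ℝ)/t * ((t:ℝ) - j)) ≤ ∏ j ∈ Finset.range t, ((m:ℝ) - j) := by
    apply Finset.prod_le_prod
    · intro j hj
      have hj' : (j:ℝ) < t := by exact_mod_cast Finset.mem_range.mp hj
      have : (0:ℝ) ≤ (m:ℝ)/t := by positivity
      nlinarith
    · intro j hj
      have hj' : (j:ℝ) < t := by exact_mod_cast Finset.mem_range.mp hj
      have hm : (t:ℝ) ≤ m := by exact_mod_cast h
      rw [div_mul_eq_mul_div, div_le_iff₀ ht]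
      nlinarith [hj'.le, sub_nonneg.mpr hj'.le]
  have hprod : ∏ j ∈ Finset.range t, ((m:ℝ)/t * ((t:ℝ) - j))
      = ((m:ℝ)/t)^t * (t.factorial : ℝ) := by
    rw [Finset.prod_mul_distrib, Finset.prod_const, Finset.card_range]
    congr 1
    have : ∏ j ∈ Finset.range t, ((t:ℝ) - j) = ((∏ j ∈ Finset.range t, (t - j) : ℕ) : ℝ) := by
      rw [Nat.cast_prod]
      apply Finset.prod_congr rfl
      intro j hj
      have := Finset.mem_range.mp hj
      rw [Nat.cast_sub this.le]
    rw [this, aux_prod_range_sub_factorial]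
  have key : ((m:ℝ)/Real.exp 1)^t = ((m:ℝ)/t)^t * ((t:ℝ)/Real.exp 1)^t := by
    rw [← mul_pow]
    congr 1
    field_simp
  rw [key]
  calc ((m:ℝ)/t)^t * ((t:ℝ)/Real.exp 1)^t ≤ ((m:ℝ)/t)^t * (t.factorial:ℝ) := by
        apply mul_le_mul_of_nonneg_left hfac (by positivity)
  _ = ∏ j ∈ Finset.range t, ((m:ℝ)/t * ((t:ℝ) - j)) := hprod.symm
  _ ≤ _ := hAB

example : True := trivial

lemma aux_desc_split : ∀ (t r m : ℕ), t ≤ r → r ≤ m →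
    m.descFactorial r = (∏ j ∈ Finset.range t, (m - j)) * (m - t).descFactorial (r - t) := by
  intro t
  induction t with
  | zero => intro r m _ _; simp
  | succ t ih =>
    intro r m htr hrm
    obtain ⟨r', rfl⟩ : ∃ r', r = r' + 1 := ⟨r - 1, by omega⟩
    obtain ⟨m', rfl⟩ : ∃ m', m = m' + 1 := ⟨m - 1, by omega⟩
    rw [Nat.succ_descFactorial_succ]
    rw [ih r' m' (by omega) (by omega)]
    rw [Finset.prod_range_succ']
    have h1 : m' + 1 - (t+1) = m' - t := by omega
    have h2 : r' + 1 - (t+1) = r' - t := by omega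
    have h3 : ∀ j, m' + 1 - (j+1) = m' - j := by omega
    simp only [h1, h2, h3, Nat.sub_zero]
    ring

lemma aux_count_upper {X Y : Type*} [Fintype X] [Fintype Y] [DecidableEq X] [DecidableEq Y]
    (X₀ : Finset X) (f₀ : X → Y) (hf₀ : Function.Injective f₀)
    (t : ℕ) (zs : Fin t → X) (ws : Fin t → Y)
    (hzs : Function.Injective zs) (hws : Function.Injective ws)
    (hz : ∀ i, zs i ∉ X₀) (hwM : ∀ i, ws i ∉ X₀.image f₀) :
    (Finset.univ.filter (fun f : X → Y => Function.Injective f ∧ (∀ x ∈ X₀, f x = f₀ x)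
        ∧ ∀ i, f (zs i) = ws i)).card
      ≤ ((Fintype.card Y - X₀.card) - t).descFactorial ((Fintype.card X - X₀.card) - t) := by
  classical
  set A₁ : Finset X := X₀ᶜ \ Finset.image zs Finset.univ with hA₁
  set M₁ : Finset Y := (X₀.image f₀)ᶜ \ Finset.image ws Finset.univ with hM₁
  set F₁ := Finset.univ.filter (fun f : X → Y => Function.Injective f ∧ (∀ x ∈ X₀, f x = f₀ x)
        ∧ ∀ i, f (zs i) = ws i) with hF₁
  have hcA : A₁.card = (Fintype.card X - X₀.card) - t := by
    rw [hA₁, Finset.card_sdiff_of_subset]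
    · rw [Finset.card_compl, Finset.card_image_of_injective _ hzs]
      simp
    · intro x hx
      simp only [Finset.mem_image, Finset.mem_univ, true_and] at hx
      obtain ⟨i, rfl⟩ := hx
      simp [hz i]
  have hcM : M₁.card = (Fintype.card Y - X₀.card) - t := by
    rw [hM₁, Finset.card_sdiff_of_subset]
    · rw [Finset.card_compl, Finset.card_image_of_injective _ hws]
      simp only [Finset.card_univ, Fintype.card_fin]
      rw [Finset.card_image_of_injective _ hf₀]
    · intro y hy
      simp only [Finset.mem_image, Finset.mem_univ, true_and] at hy
      obtain ⟨i, rfl⟩ := hy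
      simp [hwM i]
  rw [← hcA, ← hcM]
  have key : ∀ f ∈ F₁, ∀ a ∈ A₁, f a ∈ M₁ := by
    intro f hf a ha
    rw [hF₁, Finset.mem_filter] at hf
    obtain ⟨-, hfi, hfX₀, hfz⟩ := hf
    rw [hA₁, Finset.mem_sdiff, Finset.mem_compl] at ha
    obtain ⟨haX₀, haz⟩ := ha
    rw [hM₁, Finset.mem_sdiff, Finset.mem_compl]
    constructor
    · intro hmem
      rw [Finset.mem_image] at hmem
      obtain ⟨x, hx, hxe⟩ := hmem
      have : f x = f a := by rw [hfX₀ x hx, hxe]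
      exact haX₀ (hfi this ▸ hx)
    · intro hmem
      rw [Finset.mem_image] at hmem
      obtain ⟨i, -, hie⟩ := hmem
      have : f (zs i) = f a := by rw [hfz i, hie]
      exact haz (by rw [Finset.mem_image]; exact ⟨i, Finset.mem_univ _, hfi this⟩)
  have hinj2 : ∀ f ∈ F₁, ∀ g ∈ F₁,
      (∀ a : A₁, f a.1 = g a.1) → f = g := by
    intro f hf g hg hfg
    rw [hF₁, Finset.mem_filter] at hf hg
    obtain ⟨-, -, hfX₀, hfz⟩ := hf
    obtain ⟨-, -, hgX₀, hgz⟩ := hg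
    funext x
    by_cases hx : x ∈ X₀
    · rw [hfX₀ x hx, hgX₀ x hx]
    · by_cases hxz : ∃ i, zs i = x
      · obtain ⟨i, rfl⟩ := hxz
        rw [hfz i, hgz i]
      · have hxA : x ∈ A₁ := by
          rw [hA₁, Finset.mem_sdiff, Finset.mem_compl]
          refine ⟨hx, ?_⟩
          rw [Finset.mem_image]
          rintro ⟨i, -, hi⟩
          exact hxz ⟨i, hi⟩
        exact hfg ⟨x, hxA⟩
  have : Fintype.card F₁ ≤ Fintype.card (A₁ ↪ M₁) := by
    apply Fintype.card_le_of_injective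
      (fun f => ⟨fun a => ⟨f.1 a.1, key f.1 f.2 a.1 a.2⟩, by
        intro a b hab
        have hfi : Function.Injective f.1 := (Finset.mem_filter.mp f.2).2.1
        exact Subtype.ext (hfi (congrArg Subtype.val hab))⟩)
    intro f g hfg
    apply Subtype.ext
    apply hinj2 f.1 f.2 g.1 g.2
    intro a
    exact congrArg Subtype.val (congrFun (congrArg (fun (e : A₁ ↪ M₁) => e.toFun) hfg) a)
  rw [Fintype.card_coe, Fintype.card_embedding_eq, Fintype.card_coe, Fintype.card_coe] at this
  exact this

example : True := trivial

lemma aux_count_lower {X Y : Type*} [Fintype X] [Fintype Y] [DecidableEq X] [DecidableEq Y]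
    (X₀ : Finset X) (f₀ : X → Y) (hf₀ : Function.Injective f₀) :
    (Fintype.card Y - X₀.card).descFactorial (Fintype.card X - X₀.card)
      ≤ (Finset.univ.filter (fun f : X → Y =>
          Function.Injective f ∧ ∀ x ∈ X₀, f x = f₀ x)).card := by
  classical
  set F₂ := Finset.univ.filter (fun f : X → Y =>
          Function.Injective f ∧ ∀ x ∈ X₀, f x = f₀ x) with hF₂
  have hψ : ∀ emb : (↥(X₀ᶜ) ↪ ↥((X₀.image f₀)ᶜ)),
      (fun x => if h : x ∈ X₀ then f₀ x else
        (emb ⟨x, Finset.mem_compl.mpr h⟩ : Y)) ∈ F₂ := by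
    intro emb
    rw [hF₂, Finset.mem_filter]
    refine ⟨Finset.mem_univ _, ?_, ?_⟩
    · intro x x' heq
      by_cases hx : x ∈ X₀ <;> by_cases hx' : x' ∈ X₀ <;>
        simp only [hx, hx', dif_pos, dif_neg, not_false_iff] at heq
      · exact hf₀ heq
      · exfalso
        have hm := (emb ⟨x', Finset.mem_compl.mpr hx'⟩).2
        rw [Finset.mem_compl] at hm
        exact hm (by rw [Finset.mem_image]; exact ⟨x, hx, heq⟩)
      · exfalso
        have hm := (emb ⟨x, Finset.mem_compl.mpr hx⟩).2
        rw [Finset.mem_compl] at hm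
        exact hm (by rw [Finset.mem_image]; exact ⟨x', hx', heq.symm⟩)
      · have := emb.injective (Subtype.ext heq)
        exact congrArg Subtype.val this
    · intro x hx
      simp [hx]
  have : Fintype.card (↥(X₀ᶜ) ↪ ↥((X₀.image f₀)ᶜ)) ≤ Fintype.card F₂ := by
    apply Fintype.card_le_of_injective (fun emb => ⟨_, hψ emb⟩)
    intro emb emb' heq
    have heq' := congrArg Subtype.val heq
    apply DFunLike.ext
    intro a
    have := congrFun heq' a.1
    simp only [dif_neg (Finset.mem_compl.mp a.2)] at this
    exact Subtype.ext this
  rw [Fintype.card_embedding_eq, Fintype.card_coe, Fintype.card_coe, Fintype.card_coe,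
    Finset.card_compl, Finset.card_compl, Finset.card_image_of_injective _ hf₀] at this
  exact this

lemma stage2_core {X Y : Type*} [Fintype X] [Fintype Y] [DecidableEq X] [DecidableEq Y]
    (μ : (X → Y) → ℝ) (hμ0 : ∀ f, 0 ≤ μ f)
    (hinj : ∀ f, μ f ≠ 0 → Function.Injective f)
    (X₀ : Finset X) (C C' : ℝ) (hC' : 0 < C')
    (hCC' : Real.exp 1 * C' ≤ C)
    (hn : 0 < Fintype.card Y)
    (h2 : (Fintype.card Y : ℝ) / C' ≤ (Fintype.card Y : ℝ) - (X₀.card : ℝ))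
    (h3 : ∀ f₁ f₂ : X → Y, Function.Injective f₁ → Function.Injective f₂ →
      (∀ x ∈ X₀, f₁ x = f₂ x) → μ f₁ = μ f₂)
    (f₀ : X → Y) (hf₀ : μ f₀ ≠ 0)
    (t : ℕ) (zs : Fin t → X) (ws : Fin t → Y)
    (hzs : Function.Injective zs) (hws : Function.Injective ws)
    (hz : ∀ i, zs i ∉ X₀) (hcons : ∀ i, f₀ (zs i) = ws i) :
    ∑ f ∈ Finset.univ.filter (fun f : X → Y =>
        (∀ x ∈ X₀, f x = f₀ x) ∧ ∀ i, f (zs i) = ws i), μ f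
      ≤ (C / (Fintype.card Y : ℝ)) ^ t *
        ∑ f ∈ Finset.univ.filter (fun f : X → Y => ∀ x ∈ X₀, f x = f₀ x), μ f := by
  classical
  have hf₀i : Function.Injective f₀ := hinj f₀ hf₀
  have hwM : ∀ i, ws i ∉ X₀.image f₀ := by
    intro i hmem
    rw [Finset.mem_image] at hmem
    obtain ⟨x, hx, hxe⟩ := hmem
    have : f₀ x = f₀ (zs i) := by rw [hxe, hcons i]
    exact hz i (hf₀i this ▸ hx)
  set c := μ f₀ with hc
  have hc0 : 0 ≤ c := hμ0 f₀
  set n := Fintype.card Y with hnn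
  set xx := Fintype.card X with hxx
  set N := X₀.card with hN
  -- rewrite both sums as card * c
  have sum_eq : ∀ (s : Finset (X → Y)),
      (∀ f ∈ s, ∀ x ∈ X₀, f x = f₀ x) →
      ∑ f ∈ s, μ f
        = (((s.filter (fun f => Function.Injective f))).card : ℝ) * c := by
    intro s hP
    rw [← Finset.sum_filter_add_sum_filter_not s (fun f => Function.Injective f) μ]
    have e2 : ∑ f ∈ s.filter (fun f => ¬ Function.Injective f), μ f = 0 := by
      apply Finset.sum_eq_zero
      intro f hf
      rw [Finset.mem_filter] at hf
      by_contra hne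
      exact hf.2 (hinj f hne)
    have e1 : ∑ f ∈ s.filter (fun f => Function.Injective f), μ f
        = ((s.filter (fun f => Function.Injective f)).card : ℝ) * c := by
      rw [Finset.sum_congr rfl (fun f hf => ?_)]
      · rw [Finset.sum_const, nsmul_eq_mul]
      · rw [Finset.mem_filter] at hf
        exact h3 f f₀ hf.2 hf₀i (hP f hf.1)
    rw [e1, e2, add_zero]
  have seteq1 : ((Finset.univ.filter (fun f : X → Y =>
        (∀ x ∈ X₀, f x = f₀ x) ∧ ∀ i, f (zs i) = ws i)).filter
          (fun f => Function.Injective f)).card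
      = (Finset.univ.filter (fun f : X → Y => Function.Injective f ∧
        (∀ x ∈ X₀, f x = f₀ x) ∧ ∀ i, f (zs i) = ws i)).card := by
    congr 1
    ext f
    simp only [Finset.mem_filter, Finset.mem_univ, true_and]
    tauto
  have seteq2 : ((Finset.univ.filter (fun f : X → Y =>
        ∀ x ∈ X₀, f x = f₀ x)).filter (fun f => Function.Injective f)).card
      = (Finset.univ.filter (fun f : X → Y => Function.Injective f ∧
        ∀ x ∈ X₀, f x = f₀ x)).card := by
    congr 1
    ext f
    simp only [Finset.mem_filter, Finset.mem_univ, true_and]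
    tauto
  have L := sum_eq (Finset.univ.filter (fun f : X → Y =>
        (∀ x ∈ X₀, f x = f₀ x) ∧ ∀ i, f (zs i) = ws i))
    (fun f hf => ((Finset.mem_filter.mp hf).2).1)
  have R := sum_eq (Finset.univ.filter (fun f : X → Y => ∀ x ∈ X₀, f x = f₀ x))
    (fun f hf => (Finset.mem_filter.mp hf).2)
  rw [seteq1] at L
  rw [seteq2] at R
  rw [L, R]
  -- now card inequalities
  have hA := aux_count_upper X₀ f₀ hf₀i t zs ws hzs hws hz hwM
  have hB := aux_count_lower X₀ f₀ hf₀i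
  -- reassociate the conjunctions to match
  have hA' : (Finset.univ.filter (fun f : X → Y => Function.Injective f ∧
      (∀ x ∈ X₀, f x = f₀ x) ∧ ∀ i, f (zs i) = ws i)).card
      ≤ ((n - N) - t).descFactorial ((xx - N) - t) := hA
  -- nat facts
  have hxn : xx ≤ n := Fintype.card_le_of_injective f₀ hf₀i
  have hNx : N ≤ xx := by rw [hN, hxx, ← Finset.card_univ]; exact Finset.card_le_univ X₀
  have htr : t ≤ xx - N := by
    have himg : (Finset.image zs Finset.univ) ⊆ X₀ᶜ := by
      intro x hx
      rw [Finset.mem_image] at hx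
      obtain ⟨i, -, rfl⟩ := hx
      exact Finset.mem_compl.mpr (hz i)
    have := Finset.card_le_card himg
    rw [Finset.card_image_of_injective _ hzs, Finset.card_univ, Fintype.card_fin,
      Finset.card_compl] at this
    exact this
  have hrm : xx - N ≤ n - N := Nat.sub_le_sub_right hxn N
  have htm : t ≤ n - N := le_trans htr hrm
  have hsplit := aux_desc_split t (xx - N) (n - N) htr hrm
  -- real chain
  set F1c := (Finset.univ.filter (fun f : X → Y => Function.Injective f ∧
      (∀ x ∈ X₀, f x = f₀ x) ∧ ∀ i, f (zs i) = ws i)).card with hF1c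
  set F2c := (Finset.univ.filter (fun f : X → Y => Function.Injective f ∧
      ∀ x ∈ X₀, f x = f₀ x)).card with hF2c
  have hCpos : 0 < C := lt_of_lt_of_le (by positivity) hCC'
  have hnpos : (0:ℝ) < n := by exact_mod_cast hn
  have hcast : ((n - N : ℕ) : ℝ) = (n:ℝ) - N := by
    have : N ≤ n := le_trans hNx hxn
    push_cast [Nat.cast_sub this]
    ring
  have hmC' : (n:ℝ)/C' ≤ ((n - N : ℕ) : ℝ) := by rw [hcast]; exact h2
  have hprodge : (((n-N:ℕ):ℝ)/Real.exp 1)^t ≤ ∏ j ∈ Finset.range t, (((n-N:ℕ):ℝ) - j) :=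
    aux_prod_ge t (n-N) htm
  have hone : 1 ≤ (C/(n:ℝ))^t * (((n-N:ℕ):ℝ)/Real.exp 1)^t := by
    rw [← mul_pow]
    apply one_le_pow₀
    have he : (0:ℝ) < Real.exp 1 := Real.exp_pos 1
    have hm0 : (0:ℝ) ≤ ((n-N:ℕ):ℝ) := Nat.cast_nonneg _
    have h5 : (n:ℝ) ≤ C' * ((n-N:ℕ):ℝ) := by
      rw [div_le_iff₀ hC'] at hmC'
      linarith [hmC']
    have h6 : Real.exp 1 * (n:ℝ) ≤ C * ((n-N:ℕ):ℝ) := by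
      calc Real.exp 1 * (n:ℝ) ≤ Real.exp 1 * (C' * ((n-N:ℕ):ℝ)) := by
            apply mul_le_mul_of_nonneg_left h5 he.le
      _ = (Real.exp 1 * C') * ((n-N:ℕ):ℝ) := by ring
      _ ≤ C * ((n-N:ℕ):ℝ) := mul_le_mul_of_nonneg_right hCC' hm0
    rw [div_mul_div_comm, le_div_iff₀ (by positivity)]
    linarith
  have hcastprod : ((∏ j ∈ Finset.range t, ((n-N) - j) : ℕ) : ℝ)
      = ∏ j ∈ Finset.range t, (((n-N:ℕ):ℝ) - j) := by
    rw [Nat.cast_prod]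
    apply Finset.prod_congr rfl
    intro j hj
    have hj' : j < t := Finset.mem_range.mp hj
    rw [Nat.cast_sub (le_trans hj'.le htm)]
  -- goal : (F1c:ℝ) * c ≤ (C/n)^t * ((F2c:ℝ) * c)
  have main : (F1c : ℝ) ≤ (C/(n:ℝ))^t * (F2c : ℝ) := by
    have s1 : (F1c:ℝ) ≤ (((n - N) - t).descFactorial ((xx - N) - t) : ℝ) := by
      exact_mod_cast hA'
    have s2 : (((n-N).descFactorial (xx-N) : ℕ):ℝ) ≤ (F2c:ℝ) := by exact_mod_cast hB
    have s3 : (((n-N).descFactorial (xx-N) : ℕ):ℝ)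
        = (∏ j ∈ Finset.range t, (((n-N:ℕ):ℝ) - j)) * ((((n-N)-t).descFactorial ((xx-N)-t) : ℕ):ℝ) := by
      rw [hsplit, Nat.cast_mul, hcastprod]
    have hd0 : (0:ℝ) ≤ ((((n-N)-t).descFactorial ((xx-N)-t) : ℕ):ℝ) := Nat.cast_nonneg _
    have hpow0 : (0:ℝ) ≤ (C/(n:ℝ))^t := by positivity
    calc (F1c:ℝ) = 1 * (F1c:ℝ) := (one_mul _).symm
    _ ≤ ((C/(n:ℝ))^t * (((n-N:ℕ):ℝ)/Real.exp 1)^t) * (F1c:ℝ) := by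
        apply mul_le_mul_of_nonneg_right hone (Nat.cast_nonneg _)
    _ ≤ ((C/(n:ℝ))^t * (∏ j ∈ Finset.range t, (((n-N:ℕ):ℝ) - j))) * (F1c:ℝ) := by
        apply mul_le_mul_of_nonneg_right _ (Nat.cast_nonneg _)
        exact mul_le_mul_of_nonneg_left hprodge hpow0
    _ = (C/(n:ℝ))^t * ((∏ j ∈ Finset.range t, (((n-N:ℕ):ℝ) - j)) * (F1c:ℝ)) := by ring
    _ ≤ (C/(n:ℝ))^t * ((∏ j ∈ Finset.range t, (((n-N:ℕ):ℝ) - j))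
          * ((((n-N)-t).descFactorial ((xx-N)-t) : ℕ):ℝ)) := by
        apply mul_le_mul_of_nonneg_left _ hpow0
        apply mul_le_mul_of_nonneg_left s1
        rw [← hcastprod]
        exact Nat.cast_nonneg _
    _ = (C/(n:ℝ))^t * (((n-N).descFactorial (xx-N) : ℕ):ℝ) := by rw [← s3]
    _ ≤ (C/(n:ℝ))^t * (F2c:ℝ) := mul_le_mul_of_nonneg_left s2 hpow0
  calc (F1c:ℝ) * c ≤ ((C/(n:ℝ))^t * (F2c:ℝ)) * c := mul_le_mul_of_nonneg_right main hc0
  _ = (C/(n:ℝ))^t * ((F2c:ℝ) * c) := by ring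

lemma stage2_sum {X Y : Type*} [Fintype X] [Fintype Y] [DecidableEq X] [DecidableEq Y]
    (μ : (X → Y) → ℝ) (hμ0 : ∀ f, 0 ≤ μ f)
    (hinj : ∀ f, μ f ≠ 0 → Function.Injective f)
    (X₀ : Finset X) (C C' : ℝ) (hC' : 0 < C')
    (hCC' : Real.exp 1 * C' ≤ C)
    (hn : 0 < Fintype.card Y)
    (h2 : (Fintype.card Y : ℝ) / C' ≤ (Fintype.card Y : ℝ) - (X₀.card : ℝ))
    (h3 : ∀ f₁ f₂ : X → Y, Function.Injective f₁ → Function.Injective f₂ →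
      (∀ x ∈ X₀, f₁ x = f₂ x) → μ f₁ = μ f₂)
    (Q : (X → Y) → Prop) [DecidablePred Q]
    (hQ : ∀ f f', (∀ x ∈ X₀, f x = f' x) → Q f → Q f')
    (t : ℕ) (zs : Fin t → X) (ws : Fin t → Y)
    (hzs : Function.Injective zs) (hws : Function.Injective ws)
    (hz : ∀ i, zs i ∉ X₀) :
    ∑ f ∈ Finset.univ.filter (fun f : X → Y => Q f ∧ ∀ i, f (zs i) = ws i), μ f
      ≤ (C / (Fintype.card Y : ℝ)) ^ t *
        ∑ f ∈ Finset.univ.filter (fun f : X → Y => Q f), μ f := by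
  classical
  obtain ⟨y₀⟩ : Nonempty Y := Fintype.card_pos_iff.mp hn
  set Φ : (X → Y) → (X → Y) := fun f x => if x ∈ X₀ then f x else y₀ with hΦ
  have hfib : ∀ (s : Finset (X → Y)), ∑ f ∈ s, μ f
      = ∑ g : X → Y, ∑ f ∈ s.filter (fun f => Φ f = g), μ f := by
    intro s
    rw [Finset.sum_fiberwise s Φ μ]
  rw [hfib (Finset.univ.filter (fun f : X → Y => Q f ∧ ∀ i, f (zs i) = ws i)),
    hfib (Finset.univ.filter (fun f : X → Y => Q f)), Finset.mul_sum]
  apply Finset.sum_le_sum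
  intro g _
  by_cases hex : ∃ f₀, Φ f₀ = g ∧ Q f₀ ∧ (∀ i, f₀ (zs i) = ws i) ∧ μ f₀ ≠ 0
  · obtain ⟨f₀, hg, hQ₀, hcons₀, hμ₀⟩ := hex
    have hagree : ∀ f : X → Y, Φ f = g ↔ ∀ x ∈ X₀, f x = f₀ x := by
      intro f
      constructor
      · intro h x hx
        have := congrFun h x
        rw [← hg] at this
        simpa [hΦ, hx] using this
      · intro h
        funext x
        rw [← hg]
        by_cases hx : x ∈ X₀
        · simp [hΦ, hx, h x hx]
        · simp [hΦ, hx]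
    have hset1 : (Finset.univ.filter (fun f : X → Y => Q f ∧ ∀ i, f (zs i) = ws i)).filter
          (fun f => Φ f = g)
        = Finset.univ.filter (fun f : X → Y =>
            (∀ x ∈ X₀, f x = f₀ x) ∧ ∀ i, f (zs i) = ws i) := by
      ext f
      simp only [Finset.mem_filter, Finset.mem_univ, true_and]
      constructor
      · rintro ⟨⟨-, hc⟩, hfg⟩
        exact ⟨(hagree f).mp hfg, hc⟩
      · rintro ⟨ha, hc⟩
        exact ⟨⟨hQ f₀ f (fun x hx => (ha x hx).symm) hQ₀, hc⟩, (hagree f).mpr ha⟩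
    have hset2 : (Finset.univ.filter (fun f : X → Y => Q f)).filter (fun f => Φ f = g)
        = Finset.univ.filter (fun f : X → Y => ∀ x ∈ X₀, f x = f₀ x) := by
      ext f
      simp only [Finset.mem_filter, Finset.mem_univ, true_and]
      constructor
      · rintro ⟨-, hfg⟩
        exact (hagree f).mp hfg
      · intro ha
        exact ⟨hQ f₀ f (fun x hx => (ha x hx).symm) hQ₀, (hagree f).mpr ha⟩
    rw [hset1, hset2]
    exact stage2_core μ hμ0 hinj X₀ C C' hC' hCC' hn h2 h3 f₀ hμ₀ t zs ws hzs hws hz hcons₀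
  · push_neg at hex
    have hz1 : ∑ f ∈ (Finset.univ.filter
        (fun f : X → Y => Q f ∧ ∀ i, f (zs i) = ws i)).filter (fun f => Φ f = g), μ f = 0 := by
      apply Finset.sum_eq_zero
      intro f hf
      simp only [Finset.mem_filter, Finset.mem_univ, true_and] at hf
      exact hex f hf.2 hf.1.1 hf.1.2
    rw [hz1]
    have hC0 : (0:ℝ) < C := lt_of_lt_of_le (by positivity) hCC'
    apply mul_nonneg (pow_nonneg (div_nonneg hC0.le (Nat.cast_nonneg _)) t)
    exact Finset.sum_nonneg (fun f _ => hμ0 f)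

lemma stage1_key {X Y : Type*} [Fintype X] [Fintype Y] [DecidableEq X] [DecidableEq Y]
    (μ : (X → Y) → ℝ) (hμ0 : ∀ f, 0 ≤ μ f)
    (X₀ : Finset X) (C : ℝ) (hC0 : 0 ≤ C)
    (hn : 0 < Fintype.card Y)
    (e : Fin X₀.card → X)
    (h1 : ∀ i : Fin X₀.card, ∀ g : X → Y, ∀ y : Y,
      (∑ f ∈ Finset.univ.filter
          (fun f : X → Y => (∀ j, j < i → f (e j) = g (e j)) ∧ f (e i) = y), μ f)
        ≤ (C / (Fintype.card Y : ℝ)) *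
          ∑ f ∈ Finset.univ.filter
            (fun f : X → Y => ∀ j, j < i → f (e j) = g (e j)), μ f)
    (i : Fin X₀.card) (Q : (X → Y) → Prop) [DecidablePred Q]
    (hQloc : ∀ f f', (∀ j : Fin X₀.card, j < i → f (e j) = f' (e j)) → Q f → Q f')
    (y : Y) :
    ∑ f ∈ Finset.univ.filter (fun f : X → Y => Q f ∧ f (e i) = y), μ f
      ≤ (C / (Fintype.card Y : ℝ)) * ∑ f ∈ Finset.univ.filter (fun f : X → Y => Q f), μ f := by
  classical
  obtain ⟨y₀⟩ : Nonempty Y := Fintype.card_pos_iff.mp hn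
  set Φ : (X → Y) → (X → Y) :=
    fun f x => if ∃ j : Fin X₀.card, j < i ∧ e j = x then f x else y₀ with hΦ
  have hval : ∀ (f : X → Y) (x : X),
      Φ f x = if ∃ j : Fin X₀.card, j < i ∧ e j = x then f x else y₀ := fun f x => rfl
  have hfib : ∀ (s : Finset (X → Y)), ∑ f ∈ s, μ f
      = ∑ g : X → Y, ∑ f ∈ s.filter (fun f => Φ f = g), μ f := by
    intro s
    rw [Finset.sum_fiberwise s Φ μ]
  rw [hfib (Finset.univ.filter (fun f : X → Y => Q f ∧ f (e i) = y)),
    hfib (Finset.univ.filter (fun f : X → Y => Q f)), Finset.mul_sum]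
  apply Finset.sum_le_sum
  intro g _
  by_cases hex : ∃ f₀, Φ f₀ = g ∧ Q f₀
  · obtain ⟨f₀, hg, hQ₀⟩ := hex
    have hagree : ∀ f : X → Y, Φ f = g ↔ ∀ j : Fin X₀.card, j < i → f (e j) = g (e j) := by
      intro f
      constructor
      · intro h j hj
        have := congrFun h (e j)
        rw [hval] at this
        rw [if_pos (⟨j, hj, rfl⟩ : ∃ j' : Fin X₀.card, j' < i ∧ e j' = e j)] at this
        exact this
      · intro h
        funext x
        rw [← hg, hval, hval]
        by_cases hx : ∃ j : Fin X₀.card, j < i ∧ e j = x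
        · rw [if_pos hx, if_pos hx]
          obtain ⟨j, hj, rfl⟩ := hx
          have hf₀j : f₀ (e j) = g (e j) := by
            have := congrFun hg (e j)
            rw [hval] at this
            rw [if_pos (⟨j, hj, rfl⟩ : ∃ j' : Fin X₀.card, j' < i ∧ e j' = e j)] at this
            exact this
          rw [h j hj, hf₀j]
        · rw [if_neg hx, if_neg hx]
    have hQall : ∀ f : X → Y, Φ f = g → Q f := by
      intro f hf
      apply hQloc f₀ f
      · intro j hj
        rw [(hagree f₀).mp hg j hj, (hagree f).mp hf j hj]
      · exact hQ₀
    have hset1 : (Finset.univ.filter (fun f : X → Y => Q f ∧ f (e i) = y)).filter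
          (fun f => Φ f = g)
        = Finset.univ.filter (fun f : X → Y =>
            (∀ j, j < i → f (e j) = g (e j)) ∧ f (e i) = y) := by
      ext f
      simp only [Finset.mem_filter, Finset.mem_univ, true_and]
      constructor
      · rintro ⟨⟨-, hy⟩, hfg⟩
        exact ⟨(hagree f).mp hfg, hy⟩
      · rintro ⟨ha, hy⟩
        have hfg := (hagree f).mpr ha
        exact ⟨⟨hQall f hfg, hy⟩, hfg⟩
    have hset2 : (Finset.univ.filter (fun f : X → Y => Q f)).filter (fun f => Φ f = g)
        = Finset.univ.filter (fun f : X → Y => ∀ j, j < i → f (e j) = g (e j)) := by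
      ext f
      simp only [Finset.mem_filter, Finset.mem_univ, true_and]
      constructor
      · rintro ⟨-, hfg⟩
        exact (hagree f).mp hfg
      · intro ha
        have hfg := (hagree f).mpr ha
        exact ⟨hQall f hfg, hfg⟩
    rw [hset1, hset2]
    exact h1 i g y
  · push_neg at hex
    have hz1 : ∑ f ∈ (Finset.univ.filter
        (fun f : X → Y => Q f ∧ f (e i) = y)).filter (fun f => Φ f = g), μ f = 0 := by
      apply Finset.sum_eq_zero
      intro f hf
      simp only [Finset.mem_filter, Finset.mem_univ, true_and] at hf
      exact absurd hf.1.1 (fun h => (hex f hf.2) h |>.elim)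
    rw [hz1]
    apply mul_nonneg (div_nonneg hC0 (Nat.cast_nonneg _))
    exact Finset.sum_nonneg (fun f _ => hμ0 f)

lemma sum_filter_iff {α : Type*} [Fintype α] (p q : α → Prop)
    [DecidablePred p] [DecidablePred q] (h : ∀ a, p a ↔ q a) (μ : α → ℝ) :
    ∑ a ∈ Finset.univ.filter p, μ a = ∑ a ∈ Finset.univ.filter q, μ a := by
  congr 1
  ext a
  simp only [Finset.mem_filter, Finset.mem_univ, true_and, h a]

lemma stage1_main {X Y : Type*} [Fintype X] [Fintype Y] [DecidableEq X] [DecidableEq Y]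
    (μ : (X → Y) → ℝ) (hμ0 : ∀ f, 0 ≤ μ f) (hμ1 : ∑ f, μ f = 1)
    (X₀ : Finset X) (C : ℝ) (hC0 : 0 ≤ C)
    (hn : 0 < Fintype.card Y)
    (e : Fin X₀.card → X)
    (he : Function.Injective e ∧ ∀ x, x ∈ X₀ ↔ ∃ i, e i = x)
    (h1 : ∀ i : Fin X₀.card, ∀ g : X → Y, ∀ y : Y,
      (∑ f ∈ Finset.univ.filter
          (fun f : X → Y => (∀ j, j < i → f (e j) = g (e j)) ∧ f (e i) = y), μ f)
        ≤ (C / (Fintype.card Y : ℝ)) *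
          ∑ f ∈ Finset.univ.filter
            (fun f : X → Y => ∀ j, j < i → f (e j) = g (e j)), μ f)
    (s₁ : ℕ) (zs : Fin s₁ → X) (ws : Fin s₁ → Y)
    (hzs : Function.Injective zs) (hz : ∀ i, zs i ∈ X₀) :
    ∑ f ∈ Finset.univ.filter (fun f : X → Y => ∀ i, f (zs i) = ws i), μ f
      ≤ (C / (Fintype.card Y : ℝ)) ^ s₁ := by
  classical
  have claim : ∀ K, K ≤ X₀.card →
      ∑ f ∈ Finset.univ.filter (fun f : X → Y =>
          ∀ i : Fin s₁, (∃ k : Fin X₀.card, k.1 < K ∧ e k = zs i) → f (zs i) = ws i), μ f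
        ≤ (C / (Fintype.card Y : ℝ)) ^
            ((Finset.univ.filter
              (fun i : Fin s₁ => ∃ k : Fin X₀.card, k.1 < K ∧ e k = zs i)).card) := by
    intro K
    induction K with
    | zero =>
      intro _
      have hfil : Finset.univ.filter (fun f : X → Y =>
          ∀ i : Fin s₁, (∃ k : Fin X₀.card, k.1 < 0 ∧ e k = zs i) → f (zs i) = ws i)
          = Finset.univ := by
        apply Finset.filter_true_of_mem
        intro f _ i hi
        obtain ⟨k, hk, -⟩ := hi
        omega
      have hcnt0 : (Finset.univ.filter
          (fun i : Fin s₁ => ∃ k : Fin X₀.card, k.1 < 0 ∧ e k = zs i)).card = 0 := by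
        convert Finset.card_empty
        apply Finset.filter_false_of_mem
        intro i _
        rintro ⟨k, hk, -⟩
        omega
      rw [hfil, hcnt0, pow_zero, hμ1]
    | succ K ih =>
      intro hK1
      have hK : K < X₀.card := hK1
      by_cases hex : ∃ i : Fin s₁, zs i = e ⟨K, hK⟩
      · obtain ⟨i₀, hi₀⟩ := hex
        have hiff : ∀ f : X → Y,
            (∀ i : Fin s₁, (∃ k : Fin X₀.card, k.1 < K + 1 ∧ e k = zs i) → f (zs i) = ws i)
            ↔ (∀ i : Fin s₁, (∃ k : Fin X₀.card, k.1 < K ∧ e k = zs i) → f (zs i) = ws i)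
                ∧ f (e ⟨K, hK⟩) = ws i₀ := by
          intro f
          constructor
          · intro h
            refine ⟨fun i hi => ?_, ?_⟩
            · obtain ⟨k, hk, hek⟩ := hi
              exact h i ⟨k, by omega, hek⟩
            · rw [← hi₀]
              exact h i₀ ⟨⟨K, hK⟩, Nat.lt_succ_self K, hi₀.symm⟩
          · rintro ⟨hPf, hval⟩ i hi
            obtain ⟨k, hk, hek⟩ := hi
            rcases Nat.lt_or_ge k.1 K with hlt | hge
            · exact hPf i ⟨k, hlt, hek⟩
            · have hkK : k.1 = K := by omega
              have hkk : k = ⟨K, hK⟩ := Fin.ext hkK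
              subst hkk
              have heq : zs i = zs i₀ := by rw [← hek, ← hi₀]
              have := hzs heq
              subst this
              rw [← hek, hval]
        have hloc : ∀ f f' : X → Y,
            (∀ j : Fin X₀.card, j < ⟨K, hK⟩ → f (e j) = f' (e j)) →
            (∀ i : Fin s₁, (∃ k : Fin X₀.card, k.1 < K ∧ e k = zs i) → f (zs i) = ws i) →
            (∀ i : Fin s₁, (∃ k : Fin X₀.card, k.1 < K ∧ e k = zs i) → f' (zs i) = ws i) := by
          intro f f' hagree hPf i hi
          obtain ⟨k, hk, hek⟩ := hi
          have hkkF : k < (⟨K, hK⟩ : Fin X₀.card) := by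
            rw [Fin.lt_def]
            exact hk
          rw [← hek, ← hagree k hkkF, hek]
          exact hPf i ⟨k, hk, hek⟩
        have hkey := stage1_key μ hμ0 X₀ C hC0 hn e h1 ⟨K, hK⟩
          (fun f => ∀ i : Fin s₁, (∃ k : Fin X₀.card, k.1 < K ∧ e k = zs i) → f (zs i) = ws i)
          hloc (ws i₀)
        have hstep : ∑ f ∈ Finset.univ.filter (fun f : X → Y =>
            ∀ i : Fin s₁, (∃ k : Fin X₀.card, k.1 < K + 1 ∧ e k = zs i) → f (zs i) = ws i), μ f
            = ∑ f ∈ Finset.univ.filter (fun f : X → Y =>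
              (∀ i : Fin s₁, (∃ k : Fin X₀.card, k.1 < K ∧ e k = zs i) → f (zs i) = ws i)
                ∧ f (e ⟨K, hK⟩) = ws i₀), μ f :=
          sum_filter_iff _ _ hiff μ
        have hcnt1 : (Finset.univ.filter
              (fun i : Fin s₁ => ∃ k : Fin X₀.card, k.1 < K + 1 ∧ e k = zs i)).card
            = (Finset.univ.filter
              (fun i : Fin s₁ => ∃ k : Fin X₀.card, k.1 < K ∧ e k = zs i)).card + 1 := by
          have hins : Finset.univ.filter
              (fun i : Fin s₁ => ∃ k : Fin X₀.card, k.1 < K + 1 ∧ e k = zs i)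
              = insert i₀ (Finset.univ.filter
                  (fun i : Fin s₁ => ∃ k : Fin X₀.card, k.1 < K ∧ e k = zs i)) := by
            ext i
            simp only [Finset.mem_filter, Finset.mem_univ, true_and, Finset.mem_insert]
            constructor
            · rintro ⟨k, hk, hek⟩
              rcases Nat.lt_or_ge k.1 K with hlt | hge
              · exact Or.inr ⟨k, hlt, hek⟩
              · have hkK : k.1 = K := by omega
                have hkk : k = ⟨K, hK⟩ := Fin.ext hkK
                subst hkk
                left
                apply hzs
                rw [← hek, hi₀]
            · rintro (rfl | ⟨k, hk, hek⟩)
              · exact ⟨⟨K, hK⟩, Nat.lt_succ_self K, hi₀.symm⟩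
              · exact ⟨k, by omega, hek⟩
          rw [hins, Finset.card_insert_of_notMem]
          rintro hmem
          rw [Finset.mem_filter] at hmem
          obtain ⟨-, k, hk, hek⟩ := hmem
          rw [hi₀] at hek
          have hkk : k = ⟨K, hK⟩ := he.1 hek
          rw [hkk] at hk
          exact Nat.lt_irrefl K hk
        rw [hstep, hcnt1, pow_succ, mul_comm (_ ^ _) (C / (Fintype.card Y : ℝ))]
        calc _ ≤ (C / (Fintype.card Y : ℝ)) * ∑ f ∈ Finset.univ.filter (fun f : X → Y =>
              ∀ i : Fin s₁, (∃ k : Fin X₀.card, k.1 < K ∧ e k = zs i) → f (zs i) = ws i), μ f :=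
            hkey
        _ ≤ _ := by
            apply mul_le_mul_of_nonneg_left (ih (by omega))
            exact div_nonneg hC0 (Nat.cast_nonneg _)
      · have hiff : ∀ f : X → Y,
            (∀ i : Fin s₁, (∃ k : Fin X₀.card, k.1 < K + 1 ∧ e k = zs i) → f (zs i) = ws i)
            ↔ (∀ i : Fin s₁, (∃ k : Fin X₀.card, k.1 < K ∧ e k = zs i) → f (zs i) = ws i) := by
          intro f
          constructor
          · intro h i hi
            obtain ⟨k, hk, hek⟩ := hi
            exact h i ⟨k, by omega, hek⟩
          · intro h i hi
            obtain ⟨k, hk, hek⟩ := hi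
            rcases Nat.lt_or_ge k.1 K with hlt | hge
            · exact h i ⟨k, hlt, hek⟩
            · have hkK : k.1 = K := by omega
              have hkk : k = ⟨K, hK⟩ := Fin.ext hkK
              subst hkk
              exact absurd ⟨i, hek.symm⟩ hex
        have hstep := sum_filter_iff _ _ hiff μ
        have hcnteq : (Finset.univ.filter
              (fun i : Fin s₁ => ∃ k : Fin X₀.card, k.1 < K + 1 ∧ e k = zs i))
            = (Finset.univ.filter
              (fun i : Fin s₁ => ∃ k : Fin X₀.card, k.1 < K ∧ e k = zs i)) := by
          ext i
          simp only [Finset.mem_filter, Finset.mem_univ, true_and]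
          constructor
          · rintro ⟨k, hk, hek⟩
            rcases Nat.lt_or_ge k.1 K with hlt | hge
            · exact ⟨k, hlt, hek⟩
            · have hkK : k.1 = K := by omega
              have hkk : k = ⟨K, hK⟩ := Fin.ext hkK
              subst hkk
              exact absurd ⟨i, hek.symm⟩ hex
          · rintro ⟨k, hk, hek⟩
            exact ⟨k, by omega, hek⟩
        rw [hstep, hcnteq]
        exact ih (by omega)
  have hfinal := claim X₀.card le_rfl
  have hstep : ∑ f ∈ Finset.univ.filter (fun f : X → Y =>
      ∀ i : Fin s₁, (∃ k : Fin X₀.card, k.1 < X₀.card ∧ e k = zs i) → f (zs i) = ws i), μ f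
      = ∑ f ∈ Finset.univ.filter (fun f : X → Y => ∀ i, f (zs i) = ws i), μ f := by
    apply sum_filter_iff
    intro f
    constructor
    · intro h i
      obtain ⟨k, hk⟩ := (he.2 (zs i)).mp (hz i)
      exact h i ⟨k, k.2, hk⟩
    · intro h i _
      exact h i
  have hcntN : (Finset.univ.filter
      (fun i : Fin s₁ => ∃ k : Fin X₀.card, k.1 < X₀.card ∧ e k = zs i)).card = s₁ := by
    have huniv : Finset.univ.filter
        (fun i : Fin s₁ => ∃ k : Fin X₀.card, k.1 < X₀.card ∧ e k = zs i)
        = Finset.univ := by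
      apply Finset.filter_true_of_mem
      intro i _
      obtain ⟨k, hk⟩ := (he.2 (zs i)).mp (hz i)
      exact ⟨k, k.2, hk⟩
    rw [huniv, Finset.card_univ, Fintype.card_fin]
  rw [hstep, hcntN] at hfinal
  exact hfinal


/-- a probability distribution `μ` on injections `X → Y` (`|Y| = n`) built
in two stages — first the vertices of `X₀` are embedded one by one (in the order given by
the enumeration `e`), each conditional choice having probability at most `C/n`
(i.e. uniform among at least `n/C` available images); then the remaining vertices receive
a uniformly random injection into the unused elements, of which there are at least
`n/C'`, where `e·C' ≤ C` — is `(C/n)`-vertex-spread: for all distinct `x₁,…,x_s` and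
distinct `y₁,…,y_s`, `μ({φ : φ(xᵢ) = yᵢ ∀ i}) ≤ (C/n)^s`. -/
theorem two_stage_distribution_is_vertex_spread
    {X Y : Type*} [Fintype X] [Fintype Y] [DecidableEq X] [DecidableEq Y]
    (μ : (X → Y) → ℝ) (hμ0 : ∀ f, 0 ≤ μ f) (hμ1 : ∑ f, μ f = 1)
    (hinj : ∀ f, μ f ≠ 0 → Function.Injective f)
    (X₀ : Finset X) (C C' : ℝ) (hC' : 0 < C')
    (hCC' : Real.exp 1 * C' ≤ C)
    (hn : 0 < Fintype.card Y)
    (e : Fin X₀.card → X)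
    (he : Function.Injective e ∧ ∀ x, x ∈ X₀ ↔ ∃ i, e i = x)
    -- stage 1: conditionally on any partial assignment, the next vertex of `X₀` takes
    -- each value with probability at most `C/n`
    (h1 : ∀ i : Fin X₀.card, ∀ g : X → Y, ∀ y : Y,
      (∑ f ∈ Finset.univ.filter
          (fun f : X → Y => (∀ j, j < i → f (e j) = g (e j)) ∧ f (e i) = y), μ f)
        ≤ (C / (Fintype.card Y : ℝ)) *
          ∑ f ∈ Finset.univ.filter
            (fun f : X → Y => ∀ j, j < i → f (e j) = g (e j)), μ f)
    -- at least `n/C'` elements of `Y` remain unused after the first stage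
    (h2 : (Fintype.card Y : ℝ) / C' ≤ (Fintype.card Y : ℝ) - (X₀.card : ℝ))
    -- stage 2: conditionally on the first stage, the remaining vertices receive a
    -- uniformly random injection (all injective extensions are equally likely)
    (h3 : ∀ f₁ f₂ : X → Y, Function.Injective f₁ → Function.Injective f₂ →
      (∀ x ∈ X₀, f₁ x = f₂ x) → μ f₁ = μ f₂) :
    ∀ s : ℕ, ∀ xs : Fin s → X, ∀ ys : Fin s → Y,
      Function.Injective xs → Function.Injective ys →
      (∑ f ∈ Finset.univ.filter (fun f : X → Y => ∀ i, f (xs i) = ys i), μ f)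
        ≤ (C / (Fintype.card Y : ℝ)) ^ s := by
  classical
  intro s xs ys hxs hys
  have hC0 : (0:ℝ) ≤ C := (lt_of_lt_of_le (by positivity) hCC').le
  set S : Finset (Fin s) := Finset.univ.filter (fun i : Fin s => xs i ∈ X₀) with hS
  set T : Finset (Fin s) := Finset.univ.filter (fun i : Fin s => ¬ (xs i ∈ X₀)) with hT
  have hcard : S.card + T.card = s := by
    rw [hS, hT, Finset.card_filter_add_card_filter_not, Finset.card_univ,
      Fintype.card_fin]
  set eS := S.orderIsoOfFin rfl with heS
  set eT := T.orderIsoOfFin rfl with heT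
  set zsS : Fin S.card → X := fun j => xs (eS j) with hzsS
  set wsS : Fin S.card → Y := fun j => ys (eS j) with hwsS
  set zsT : Fin T.card → X := fun j => xs (eT j) with hzsT
  set wsT : Fin T.card → Y := fun j => ys (eT j) with hwsT
  have hzsSi : Function.Injective zsS := fun a b hab =>
    (OrderIso.injective eS) (Subtype.ext (hxs hab))
  have hzsTi : Function.Injective zsT := fun a b hab =>
    (OrderIso.injective eT) (Subtype.ext (hxs hab))
  have hwsTi : Function.Injective wsT := fun a b hab =>
    (OrderIso.injective eT) (Subtype.ext (hys hab))
  have hzS : ∀ j, zsS j ∈ X₀ := fun j => (Finset.mem_filter.mp (eS j).2).2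
  have hzT : ∀ j, zsT j ∉ X₀ := fun j => (Finset.mem_filter.mp (eT j).2).2
  have hiff : ∀ f : X → Y, (∀ i, f (xs i) = ys i)
      ↔ ((∀ j : Fin S.card, f (zsS j) = wsS j) ∧ (∀ j : Fin T.card, f (zsT j) = wsT j)) := by
    intro f
    constructor
    · intro h
      exact ⟨fun j => h (eS j), fun j => h (eT j)⟩
    · rintro ⟨h1', h2'⟩ i
      by_cases hi : xs i ∈ X₀
      · have hiS : i ∈ S := by rw [hS, Finset.mem_filter]; exact ⟨Finset.mem_univ _, hi⟩
        have := h1' (eS.symm ⟨i, hiS⟩)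
        simpa only [hzsS, hwsS, OrderIso.apply_symm_apply] using this
      · have hiT : i ∈ T := by rw [hT, Finset.mem_filter]; exact ⟨Finset.mem_univ _, hi⟩
        have := h2' (eT.symm ⟨i, hiT⟩)
        simpa only [hzsT, hwsT, OrderIso.apply_symm_apply] using this
  have hQswap : ∀ f : X → Y, ((∀ j : Fin S.card, f (zsS j) = wsS j)
      ∧ (∀ j : Fin T.card, f (zsT j) = wsT j))
      ↔ ((fun f : X → Y => ∀ j : Fin S.card, f (zsS j) = wsS j) f
          ∧ ∀ j : Fin T.card, f (zsT j) = wsT j) := fun f => Iff.rfl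
  have step0 : ∑ f ∈ Finset.univ.filter (fun f : X → Y => ∀ i, f (xs i) = ys i), μ f
      = ∑ f ∈ Finset.univ.filter (fun f : X → Y =>
          (fun f : X → Y => ∀ j : Fin S.card, f (zsS j) = wsS j) f
            ∧ ∀ j : Fin T.card, f (zsT j) = wsT j), μ f :=
    sum_filter_iff _ _ (fun f => (hiff f).trans (hQswap f)) μ
  have hQloc : ∀ f f' : X → Y, (∀ x ∈ X₀, f x = f' x) →
      (fun f : X → Y => ∀ j : Fin S.card, f (zsS j) = wsS j) f →
      (fun f : X → Y => ∀ j : Fin S.card, f (zsS j) = wsS j) f' := by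
    intro f f' hagree hf j
    rw [← hagree (zsS j) (hzS j)]
    exact hf j
  have step1 := stage2_sum μ hμ0 hinj X₀ C C' hC' hCC' hn h2 h3
    (fun f : X → Y => ∀ j : Fin S.card, f (zsS j) = wsS j) hQloc
    T.card zsT wsT hzsTi hwsTi hzT
  have step2 := stage1_main μ hμ0 hμ1 X₀ C hC0 hn e he h1 S.card zsS wsS hzsSi hzS
  calc ∑ f ∈ Finset.univ.filter (fun f : X → Y => ∀ i, f (xs i) = ys i), μ f
      = _ := step0
  _ ≤ (C / (Fintype.card Y : ℝ)) ^ T.card * ∑ f ∈ Finset.univ.filter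
        (fun f : X → Y => ∀ j : Fin S.card, f (zsS j) = wsS j), μ f := step1
  _ ≤ (C / (Fintype.card Y : ℝ)) ^ T.card * (C / (Fintype.card Y : ℝ)) ^ S.card := by
      apply mul_le_mul_of_nonneg_left step2
      exact pow_nonneg (div_nonneg hC0 (Nat.cast_nonneg _)) _
  _ = (C / (Fintype.card Y : ℝ)) ^ s := by
      rw [← pow_add, Nat.add_comm, hcard]
end

section
/- Let $F$ be a graph on $m$ vertices, let $B$ and $D$ be the absorber graphs on vertex sets $\{A_{i,j}\}_{i \in [m], j \in [t]} \cup S$ defined as follows. Then both $B \cup D$ and $(B \cup D) \setminus S$ contain an $F$-factor. -/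
/-- `G` has an `F`-factor covering exactly the vertex set `T`: a collection of pairwise
disjoint blocks partitioning `T`, each spanning a copy of `F` in `G`. -/
def FactorOn {W : Type*} [DecidableEq W] (G : SimpleGraph W) {m : ℕ}
    (F : SimpleGraph (Fin m)) (T : Finset W) : Prop :=
  ∃ P : Finset (Finset W),
    (∀ p ∈ P, ∃ f : Fin m → W, Function.Injective f ∧ p = Finset.image f Finset.univ ∧
      ∀ a b, F.Adj a b → G.Adj (f a) (f b)) ∧
    (∀ p ∈ P, ∀ q ∈ P, p ≠ q → Disjoint p q) ∧
    P.biUnion id = T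

/-- `F⁺`: the graph `F` together with a duplicate `u'` of the vertex `u`, adjacent to
exactly the neighbours of `u`. -/
def Fplus {α : Type*} (F : SimpleGraph α) (u : α) : SimpleGraph (α ⊕ Unit) :=
  SimpleGraph.fromRel (fun x y =>
    (∃ a b, x = Sum.inl a ∧ y = Sum.inl b ∧ F.Adj a b) ∨
    (∃ a, x = Sum.inl a ∧ y = Sum.inr () ∧ F.Adj a u))

/-- `F* = F⁺ \ E(F')`. -/
def Fstar {α : Type*} (F : SimpleGraph α) (u : α) (F' : SimpleGraph α) :
    SimpleGraph (α ⊕ Unit) :=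
  Fplus F u \ SimpleGraph.map Sum.inl F'

/-- The identification of the vertices of `F*` (i.e. of `F⁺`) with the vertices of the
block `A_{i,j}` together with its "previous" vertex: `u' ↦ s_i` if `j = 0`, and
`u' ↦ v_{i,j-1}^m` otherwise; `a ↦ v_{i,j}^a`.  Here vertices `v_{i,j}^a` are modelled
as `Sum.inl (i,j,a)` and `s_i` as `Sum.inr i`. -/
def embmap (m t : ℕ) (u : Fin m) (i : Fin m) (j : Fin t) :
    (Fin m ⊕ Unit) → ((Fin m × Fin t × Fin m) ⊕ Fin m)
  | Sum.inl a => Sum.inl (i, j, a)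
  | Sum.inr _ =>
      if h : (j : ℕ) = 0 then Sum.inr i
      else Sum.inl (i, ⟨(j : ℕ) - 1, by omega⟩, u)

namespace AbsorberAux


def gmap (m t : ℕ) (u : Fin m) (i : Fin m) (j : Fin t) (a : Fin m) :
    (Fin m × Fin t × Fin m) ⊕ Fin m :=
  if a = u then embmap m t u i j (Sum.inr ()) else Sum.inl (i, j, a)

lemma gmap_eq_gmap_iff {m t : ℕ} (u : Fin m) (i i' : Fin m) (j j' : Fin t) (a a' : Fin m) :
    gmap m t u i j a = gmap m t u i' j' a' ↔ i = i' ∧ j = j' ∧ a = a' := by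
  constructor
  · intro h
    simp only [gmap, embmap] at h
    split_ifs at h <;>
      simp_all [Prod.ext_iff, Fin.ext_iff] <;> omega
  · rintro ⟨rfl, rfl, rfl⟩; rfl

lemma gmap_ne_A0 {m t : ℕ} (ht : 0 < t) (u : Fin m) (i b : Fin m) (j : Fin t) (a : Fin m) :
    gmap m t u i j a ≠ Sum.inl (b, ⟨t - 1, by omega⟩, u) := by
  simp only [gmap, embmap]
  split_ifs <;> simp_all [Prod.ext_iff, Fin.ext_iff] <;> omega

lemma gmap_cover {m t : ℕ} (ht : 0 < t) (u : Fin m)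
    (x : (Fin m × Fin t × Fin m) ⊕ Fin m) :
    (∃ i j a, gmap m t u i j a = x) ∨
      ∃ b, x = Sum.inl (b, ⟨t - 1, by omega⟩, u) := by
  rcases x with ⟨i, j, a⟩ | i
  · by_cases ha : a = u
    · by_cases hj : (j : ℕ) = t - 1
      · right
        exact ⟨i, by rw [ha, show j = ⟨t - 1, by omega⟩ from Fin.ext hj]⟩
      · left
        refine ⟨i, ⟨(j : ℕ) + 1, by omega⟩, u, ?_⟩
        simp only [gmap, embmap, if_pos rfl]
        rw [dif_neg (by simp)]
        simp [Prod.ext_iff, Fin.ext_iff, ha]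
    · exact Or.inl ⟨i, j, a, by simp [gmap, ha]⟩
  · left
    exact ⟨i, ⟨0, ht⟩, u, by simp [gmap, embmap]⟩

end AbsorberAux

/-- with the absorber graphs `B` (copies of `F*` chained through the blocks
`A_{i,j}`, plus a copy of `F` on `A₀ = {v_{1,t}^m,…,v_{m,t}^m}`) and `D` (a copy of the
spanning forest `F'` on each block `A_{i,j}`), both `B ∪ D` and `(B ∪ D) ∖ S` contain an
`F`-factor. -/
theorem absorber_has_factor (m t : ℕ) (hm : 0 < m) (ht : 0 < t)
    (F F' : SimpleGraph (Fin m)) [DecidableRel F.Adj] (u : Fin m)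
    (hu : F.degree u = F.minDegree)
    (hF' : F' ≤ F) (hforest : F'.IsAcyclic)
    (B D : SimpleGraph ((Fin m × Fin t × Fin m) ⊕ Fin m))
    -- `B[A₀] ≅ F`
    (hB0 : ∀ a b : Fin m, F.Adj a b →
      B.Adj (Sum.inl (a, ⟨t - 1, by omega⟩, u)) (Sum.inl (b, ⟨t - 1, by omega⟩, u)))
    -- each block carries a copy of `F*`, with `u'` identified with `s_i` (for `j = 0`)
    -- or with `v_{i,j-1}^m` (for `j ≥ 1`), and `u` with `v_{i,j}^m`
    (hB : ∀ (i : Fin m) (j : Fin t) (x y : Fin m ⊕ Unit),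
      (Fstar F u F').Adj x y → B.Adj (embmap m t u i j x) (embmap m t u i j y))
    -- `D[A_{i,j}] ≅ F'`
    (hD : ∀ (i : Fin m) (j : Fin t) (a b : Fin m), F'.Adj a b →
      D.Adj (Sum.inl (i, j, a)) (Sum.inl (i, j, b))) :
    FactorOn (B ⊔ D) F (Finset.univ) ∧
      FactorOn (B ⊔ D) F (Finset.univ.filter (fun x => x.isLeft)) := by
  classical
  -- edges within a block: `(B ⊔ D)[A_{i,j}] ⊇ F`
  have hFF : ∀ (i : Fin m) (j : Fin t) (a b : Fin m), F.Adj a b →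
      (B ⊔ D).Adj (Sum.inl (i, j, a)) (Sum.inl (i, j, b)) := by
    intro i j a b hab
    by_cases h' : F'.Adj a b
    · exact Or.inr (hD i j a b h')
    · refine Or.inl (hB i j (Sum.inl a) (Sum.inl b) ?_)
      rw [Fstar, SimpleGraph.sdiff_adj]
      constructor
      · rw [Fplus, SimpleGraph.fromRel_adj]
        exact ⟨by simpa using hab.ne, Or.inl (Or.inl ⟨a, b, rfl, rfl, hab⟩)⟩
      · rw [SimpleGraph.map_adj']
        rintro ⟨-, a', b', hadj, ha, hb⟩
        simp only [Function.Embedding.coeFn_mk, Sum.inl.injEq] at ha hb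
        subst ha; subst hb
        exact h' hadj
  -- edges from a block to the "previous" vertex
  have hFu : ∀ (i : Fin m) (j : Fin t) (a : Fin m), F.Adj a u →
      B.Adj (Sum.inl (i, j, a)) (embmap m t u i j (Sum.inr ())) := by
    intro i j a hau
    refine hB i j (Sum.inl a) (Sum.inr ()) ?_
    rw [Fstar, SimpleGraph.sdiff_adj]
    constructor
    · rw [Fplus, SimpleGraph.fromRel_adj]
      exact ⟨by simp, Or.inl (Or.inr ⟨a, rfl, rfl, hau⟩)⟩
    · rw [SimpleGraph.map_adj']
      rintro ⟨-, a', b', -, -, hb⟩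
      simp at hb
  constructor
  · -- full factor: shifted blocks (copies of `F⁺ - u`) plus `A₀`
    refine ⟨insert
      (Finset.univ.image (fun a : Fin m =>
        (Sum.inl (a, ⟨t - 1, by omega⟩, u) : (Fin m × Fin t × Fin m) ⊕ Fin m)))
      (Finset.univ.image (fun p : Fin m × Fin t =>
        Finset.univ.image (AbsorberAux.gmap m t u p.1 p.2))), ?_, ?_, ?_⟩
    · intro p hp
      rcases Finset.mem_insert.mp hp with rfl | hp
      · refine ⟨fun a => Sum.inl (a, ⟨t - 1, by omega⟩, u), ?_, rfl, ?_⟩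
        · intro a b h; simpa using h
        · intro a b hab; exact Or.inl (hB0 a b hab)
      · rcases Finset.mem_image.mp hp with ⟨⟨i, j⟩, -, rfl⟩
        refine ⟨AbsorberAux.gmap m t u i j, ?_, rfl, ?_⟩
        · intro a b h
          exact ((AbsorberAux.gmap_eq_gmap_iff u i i j j a b).mp h).2.2
        · intro a b hab
          by_cases ha : a = u
          · have hb : b ≠ u := fun h => hab.ne (ha.trans h.symm)
            simp only [AbsorberAux.gmap, if_pos ha, if_neg hb]
            exact Or.inl (hFu i j b (ha ▸ hab.symm)).symm
          · by_cases hb : b = u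
            · simp only [AbsorberAux.gmap, if_pos hb, if_neg ha]
              exact Or.inl (hFu i j a (hb ▸ hab))
            · simp only [AbsorberAux.gmap, if_neg ha, if_neg hb]
              exact hFF i j a b hab
    · intro p hp q hq hpq
      rw [Finset.disjoint_left]
      intro x hx hx'
      rcases Finset.mem_insert.mp hp with rfl | hp <;>
        rcases Finset.mem_insert.mp hq with rfl | hq
      · exact hpq rfl
      · rcases Finset.mem_image.mp hq with ⟨⟨i, j⟩, -, rfl⟩
        rcases Finset.mem_image.mp hx with ⟨b, -, rfl⟩
        rcases Finset.mem_image.mp hx' with ⟨a, -, ha⟩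
        exact AbsorberAux.gmap_ne_A0 ht u i b j a ha
      · rcases Finset.mem_image.mp hp with ⟨⟨i, j⟩, -, rfl⟩
        rcases Finset.mem_image.mp hx' with ⟨b, -, rfl⟩
        rcases Finset.mem_image.mp hx with ⟨a, -, ha⟩
        exact AbsorberAux.gmap_ne_A0 ht u i b j a ha
      · rcases Finset.mem_image.mp hp with ⟨⟨i, j⟩, -, rfl⟩
        rcases Finset.mem_image.mp hq with ⟨⟨i', j'⟩, -, rfl⟩
        rcases Finset.mem_image.mp hx with ⟨a, -, ha⟩
        rcases Finset.mem_image.mp hx' with ⟨a', -, ha'⟩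
        obtain ⟨rfl, rfl, rfl⟩ :=
          (AbsorberAux.gmap_eq_gmap_iff u i i' j j' a a').mp (ha.trans ha'.symm)
        exact hpq rfl
    · rw [Finset.eq_univ_iff_forall]
      intro x
      rw [Finset.mem_biUnion]
      rcases AbsorberAux.gmap_cover ht u x with ⟨i, j, a, rfl⟩ | ⟨b, rfl⟩
      · refine ⟨Finset.univ.image (AbsorberAux.gmap m t u i j), ?_, ?_⟩
        · exact Finset.mem_insert_of_mem (Finset.mem_image.mpr ⟨(i, j), Finset.mem_univ _, rfl⟩)
        · exact Finset.mem_image.mpr ⟨a, Finset.mem_univ _, rfl⟩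
      · refine ⟨_, Finset.mem_insert_self _ _, ?_⟩
        exact Finset.mem_image.mpr ⟨b, Finset.mem_univ _, rfl⟩
  · -- factor avoiding `S`: each block `A_{i,j}` is a copy of `F`
    refine ⟨Finset.univ.image (fun p : Fin m × Fin t =>
        Finset.univ.image (fun a : Fin m =>
          (Sum.inl (p.1, p.2, a) : (Fin m × Fin t × Fin m) ⊕ Fin m))), ?_, ?_, ?_⟩
    · intro p hp
      rcases Finset.mem_image.mp hp with ⟨⟨i, j⟩, -, rfl⟩
      refine ⟨fun a => Sum.inl (i, j, a), ?_, rfl, ?_⟩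
      · intro a b h; simpa using h
      · intro a b hab; exact hFF i j a b hab
    · intro p hp q hq hpq
      rw [Finset.disjoint_left]
      intro x hx hx'
      rcases Finset.mem_image.mp hp with ⟨⟨i, j⟩, -, rfl⟩
      rcases Finset.mem_image.mp hq with ⟨⟨i', j'⟩, -, rfl⟩
      rcases Finset.mem_image.mp hx with ⟨a, -, rfl⟩
      rcases Finset.mem_image.mp hx' with ⟨a', -, ha'⟩
      simp only [Sum.inl.injEq, Prod.mk.injEq] at ha'
      obtain ⟨rfl, rfl, rfl⟩ := ha'
      exact hpq rfl
    · ext x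
      rw [Finset.mem_biUnion, Finset.mem_filter]
      constructor
      · rintro ⟨p, hp, hx⟩
        rcases Finset.mem_image.mp hp with ⟨⟨i, j⟩, -, rfl⟩
        rcases Finset.mem_image.mp hx with ⟨a, -, rfl⟩
        exact ⟨Finset.mem_univ _, rfl⟩
      · rintro ⟨-, hx⟩
        rcases x with ⟨i, j, a⟩ | i
        · refine ⟨Finset.univ.image (fun a : Fin m =>
            (Sum.inl (i, j, a) : (Fin m × Fin t × Fin m) ⊕ Fin m)), ?_, ?_⟩
          · exact Finset.mem_image.mpr ⟨(i, j), Finset.mem_univ _, rfl⟩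
          · exact Finset.mem_image.mpr ⟨a, Finset.mem_univ _, rfl⟩
        · simp at hx
end
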